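/- arXiv:2411.07582 — 4 statements merged into one kernel-verified Lean document; each statement's English description precedes it below -/
import Mathlib

section
/- Let Λ be a row-finite k-graph with no sources and let H ⊆ Λ⁰ be hereditary and saturated. Then the quotient k-graph Λ/H (paths λ of Λ with s(λ) ∉ H, vertices Λ⁰∖H) is again a row-finite k-graph without sources, and the talented monoid T_{Λ/H} is isomorphic as a ℤ^k-monoid to the quotient T_Λ/≡_H, where a ≡_H b iff a + x = b + y for some x, y in the ℤ^k-order ideal ⟨H⟩ generated by H. -/
/-- A (small) `k`-graph: a small category `Λ` with vertex set `V`, path set `P`,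
range and source maps `r, s`, a degree functor `d : Λ → ℕᵏ` satisfying the
unique factorization property. -/
structure KGraph (k : ℕ) where
  V : Type
  P : Type
  r : P → V
  s : P → V
  d : P → Fin k → ℕ
  ident : V → P
  comp : (p q : P) → s p = r q → P
  r_ident : ∀ v, r (ident v) = v
  s_ident : ∀ v, s (ident v) = v
  d_ident : ∀ v, d (ident v) = 0
  r_comp : ∀ p q h, r (comp p q h) = r p
  s_comp : ∀ p q h, s (comp p q h) = s q
  d_comp : ∀ p q h, d (comp p q h) = d p + d q
  ident_comp : ∀ (p : P) (h : s (ident (r p)) = r p), comp (ident (r p)) p h = p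
  comp_ident : ∀ (p : P) (h : s p = r (ident (s p))), comp p (ident (s p)) h = p
  comp_assoc : ∀ (p q t : P) (h1 : s p = r q) (h2 : s q = r t)
      (h3 : s (comp p q h1) = r t) (h4 : s p = r (comp q t h2)),
      comp (comp p q h1) t h3 = comp p (comp q t h2) h4
  factor : ∀ (p : P) (m n : Fin k → ℕ), d p = m + n →
      ∃! qt : P × P, ∃ h : s qt.1 = r qt.2,
        comp qt.1 qt.2 h = p ∧ d qt.1 = m ∧ d qt.2 = n

namespace KGraph

variable {k : ℕ}

/-- `vΛⁿ`, the set of paths with range `v` and degree `n`. -/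
def pathsSet (Λ : KGraph k) (v : Λ.V) (n : Fin k → ℕ) : Set Λ.P :=
  {p | Λ.r p = v ∧ Λ.d p = n}

/-- `Λ` is row-finite if every `vΛⁿ` is finite. -/
def RowFinite (Λ : KGraph k) : Prop := ∀ v n, (Λ.pathsSet v n).Finite

/-- `Λ` has no sources if every `vΛⁿ` is nonempty. -/
def NoSources (Λ : KGraph k) : Prop := ∀ v n, (Λ.pathsSet v n).Nonempty

/-- The element `Σ_{λ ∈ vΛⁿ} s(λ)` of the free commutative monoid `ℕ^(Λ⁰)`. -/
noncomputable def vSum (Λ : KGraph k) (hfin : Λ.RowFinite) (v : Λ.V) (n : Fin k → ℕ) :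
    Λ.V →₀ ℕ :=
  ∑ p ∈ (hfin v n).toFinset, Finsupp.single (Λ.s p) 1

end KGraph

namespace KGraph

/-- The free commutative monoid on `Λ⁰ × ℤᵏ`. -/
abbrev TalF (Λ : KGraph k) : Type := (Λ.V × (Fin k → ℤ)) →₀ ℕ

/-- The defining relations of the talented monoid:
`v(n) = Σ_{α ∈ vΛ^{e_i}} s(α)(n + e_i)`. -/
noncomputable def TalRel (Λ : KGraph k) (hfin : Λ.RowFinite) : TalF Λ → TalF Λ → Prop :=
  fun a b => ∃ (v : Λ.V) (n : Fin k → ℤ) (i : Fin k),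
    a = Finsupp.single (v, n) 1 ∧
    b = ∑ p ∈ (hfin v (Pi.single i 1)).toFinset,
          Finsupp.single (Λ.s p, n + Pi.single i 1) 1

/-- The congruence generated by the defining relations of the talented monoid. -/
noncomputable def TalCon (Λ : KGraph k) (hfin : Λ.RowFinite) : AddCon (TalF Λ) :=
  addConGen (TalRel Λ hfin)

/-- The talented monoid `T_Λ`. -/
abbrev Tal (Λ : KGraph k) (hfin : Λ.RowFinite) : Type := (TalCon Λ hfin).Quotient

/-- The quotient map `ℕ^(Λ⁰ × ℤᵏ) → T_Λ`. -/
noncomputable def tmk (Λ : KGraph k) (hfin : Λ.RowFinite) : TalF Λ → Tal Λ hfin :=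
  (TalCon Λ hfin).mk'

/-- Shift of states on the free commutative monoid; it induces the `ℤᵏ`-action on `T_Λ`. -/
noncomputable def shiftF (Λ : KGraph k) (p : Fin k → ℤ) : TalF Λ → TalF Λ :=
  Finsupp.mapDomain (fun q => (q.1, q.2 + p))

/-- A `ℤᵏ`-order ideal of `T_Λ`: a submonoid, downward closed in the algebraic
preorder, and closed under the `ℤᵏ`-action (expressed on representatives). -/
noncomputable def IsOrderIdeal (Λ : KGraph k) (hfin : Λ.RowFinite)
    (J : Set (Tal Λ hfin)) : Prop :=
  (0 : Tal Λ hfin) ∈ J ∧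
  (∀ a b, a ∈ J → b ∈ J → a + b ∈ J) ∧
  (∀ a b : Tal Λ hfin, a + b ∈ J → a ∈ J) ∧
  (∀ (p : Fin k → ℤ) (a : TalF Λ), tmk Λ hfin a ∈ J → tmk Λ hfin (shiftF Λ p a) ∈ J)

/-- `H ⊆ Λ⁰` is hereditary. -/
def Hereditary (Λ : KGraph k) (H : Set Λ.V) : Prop :=
  ∀ p : Λ.P, Λ.r p ∈ H → Λ.s p ∈ H

/-- `H ⊆ Λ⁰` is saturated. -/
def Saturated (Λ : KGraph k) (H : Set Λ.V) : Prop :=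
  ∀ (v : Λ.V) (n : Fin k → ℕ),
    (∀ p : Λ.P, Λ.r p = v → Λ.d p = n → Λ.s p ∈ H) → v ∈ H

/-- The `ℤᵏ`-order ideal of `T_Λ` generated by a set `X ⊆ Λ⁰` of vertices:
all `x` with `x ≤ Σᵢ ⁿⁱvᵢ` for finitely many `vᵢ ∈ X`, `nᵢ ∈ ℤᵏ`. -/
noncomputable def genIdeal (Λ : KGraph k) (hfin : Λ.RowFinite) (X : Set Λ.V) :
    Set (Tal Λ hfin) :=
  {x | ∃ b : TalF Λ, (∀ q ∈ b.support, q.1 ∈ X) ∧ ∃ z, x + z = tmk Λ hfin b}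

end KGraph

namespace KGraph

section Aux15

variable {k : ℕ}

/-- Additive hom on a free commutative monoid determined by values on generators. -/
noncomputable def genHom {α : Type} {N : Type*} [AddCommMonoid N] (g : α → N) :
    (α →₀ ℕ) →+ N :=
  Finsupp.liftAddHom fun a => (smulAddHom ℕ N).flip (g a)

lemma genHom_single {α : Type} {N : Type*} [AddCommMonoid N] (g : α → N) (a : α) :
    genHom g (Finsupp.single a 1) = g a := by
  rw [genHom, Finsupp.liftAddHom_apply_single]
  exact one_nsmul (g a)

lemma genHom_apply {α : Type} {N : Type*} [AddCommMonoid N] (g : α → N) (b : α →₀ ℕ) :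
    genHom g b = b.sum fun a n => n • g a := by
  rw [genHom, Finsupp.liftAddHom_apply]; rfl

lemma tmk_zero (Λ : KGraph k) (hfin : Λ.RowFinite) : tmk Λ hfin 0 = 0 :=
  map_zero (TalCon Λ hfin).mk'

lemma tmk_add (Λ : KGraph k) (hfin : Λ.RowFinite) (a b : TalF Λ) :
    tmk Λ hfin (a + b) = tmk Λ hfin a + tmk Λ hfin b :=
  map_add (TalCon Λ hfin).mk' a b

lemma tmk_nsmul (Λ : KGraph k) (hfin : Λ.RowFinite) (c : ℕ) (a : TalF Λ) :
    tmk Λ hfin (c • a) = c • tmk Λ hfin a :=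
  map_nsmul (TalCon Λ hfin).mk' c a

lemma tmk_sum (Λ : KGraph k) (hfin : Λ.RowFinite) {ι : Type*} (s : Finset ι)
    (f : ι → TalF Λ) : tmk Λ hfin (∑ i ∈ s, f i) = ∑ i ∈ s, tmk Λ hfin (f i) :=
  map_sum (TalCon Λ hfin).mk' f s

lemma tmk_surjective (Λ : KGraph k) (hfin : Λ.RowFinite) :
    Function.Surjective (tmk Λ hfin) :=
  AddCon.mk'_surjective

lemma tmk_eq_of_rel (Λ : KGraph k) (hfin : Λ.RowFinite) {a b : TalF Λ}
    (h : TalRel Λ hfin a b) : tmk Λ hfin a = tmk Λ hfin b :=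
  (TalCon Λ hfin).eq.2 (AddConGen.Rel.of _ _ h)

lemma lift_tmk (Λ : KGraph k) (hfin : Λ.RowFinite) {N : Type*} [AddCommMonoid N]
    (f : TalF Λ →+ N) (hker : TalCon Λ hfin ≤ AddCon.ker f) (b : TalF Λ) :
    (TalCon Λ hfin).lift f hker (tmk Λ hfin b) = f b :=
  AddCon.lift_mk' hker b

lemma mem_genIdeal_zero (Λ : KGraph k) (hfin : Λ.RowFinite) (H : Set Λ.V) :
    (0 : Tal Λ hfin) ∈ genIdeal Λ hfin H :=
  ⟨0, by simp, 0, by rw [add_zero]; exact (tmk_zero Λ hfin).symm⟩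

lemma mem_genIdeal_add (Λ : KGraph k) (hfin : Λ.RowFinite) (H : Set Λ.V)
    {x y : Tal Λ hfin} (hx : x ∈ genIdeal Λ hfin H) (hy : y ∈ genIdeal Λ hfin H) :
    x + y ∈ genIdeal Λ hfin H := by
  classical
  obtain ⟨b, hb, z, hz⟩ := hx
  obtain ⟨b', hb', z', hz'⟩ := hy
  refine ⟨b + b', ?_, z + z', ?_⟩
  · intro q hq
    rcases Finset.mem_union.1 (Finsupp.support_add hq) with h | h
    exacts [hb q h, hb' q h]
  · rw [add_add_add_comm x y z z', hz, hz', ← tmk_add]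

lemma mem_genIdeal_of_support (Λ : KGraph k) (hfin : Λ.RowFinite) (H : Set Λ.V)
    (b : TalF Λ) (hb : ∀ q ∈ b.support, q.1 ∈ H) :
    tmk Λ hfin b ∈ genIdeal Λ hfin H :=
  ⟨b, hb, 0, add_zero _⟩

/-- The congruence `a ≡_H b` iff `a + x = b + y` for some `x, y ∈ ⟨H⟩`. -/
noncomputable def hCon (Λ : KGraph k) (hfin : Λ.RowFinite) (H : Set Λ.V) :
    AddCon (Tal Λ hfin) where
  r a b := ∃ x ∈ genIdeal Λ hfin H, ∃ y ∈ genIdeal Λ hfin H, a + x = b + y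
  iseqv := by
    refine ⟨fun a => ⟨0, mem_genIdeal_zero Λ hfin H, 0, mem_genIdeal_zero Λ hfin H, rfl⟩,
      ?_, ?_⟩
    · rintro a b ⟨x, hx, y, hy, h⟩
      exact ⟨y, hy, x, hx, h.symm⟩
    · rintro a b c ⟨x, hx, y, hy, h⟩ ⟨x', hx', y', hy', h'⟩
      exact ⟨x + x', mem_genIdeal_add Λ hfin H hx hx', y' + y,
        mem_genIdeal_add Λ hfin H hy' hy, by
          rw [← add_assoc a x x', h, add_right_comm b y x', h', add_assoc c y' y]⟩
  add' := by
    rintro a b c d ⟨x, hx, y, hy, h⟩ ⟨x', hx', y', hy', h'⟩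
    exact ⟨x + x', mem_genIdeal_add Λ hfin H hx hx', y + y',
      mem_genIdeal_add Λ hfin H hy hy', by
        rw [add_add_add_comm a c x x', h, h', add_add_add_comm b d y y']⟩

lemma hCon_eq (Λ : KGraph k) (hfin : Λ.RowFinite) (H : Set Λ.V) {a b : Tal Λ hfin} :
    (hCon Λ hfin H).mk' a = (hCon Λ hfin H).mk' b ↔
      ∃ x ∈ genIdeal Λ hfin H, ∃ y ∈ genIdeal Λ hfin H, a + x = b + y :=
  (hCon Λ hfin H).eq

lemma hCon_mk'_eq_zero (Λ : KGraph k) (hfin : Λ.RowFinite) (H : Set Λ.V)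
    {x : Tal Λ hfin} (hx : x ∈ genIdeal Λ hfin H) : (hCon Λ hfin H).mk' x = 0 := by
  have h1 : (hCon Λ hfin H).mk' x = (hCon Λ hfin H).mk' 0 :=
    (hCon Λ hfin H).eq.2 ⟨0, mem_genIdeal_zero Λ hfin H, x, hx, by rw [add_zero, zero_add]⟩
  rw [h1, map_zero]

/-- The key reindexing bijection between `wQⁿ` and `{p ∈ vΛⁿ : s p ∉ H}`. -/
lemma sum_key (Λ : KGraph k) (hfin : Λ.RowFinite) (H : Set Λ.V)
    (Q : KGraph k) (eV : Q.V ≃ {v : Λ.V // v ∉ H}) (eP : Q.P ≃ {p : Λ.P // Λ.s p ∉ H})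
    (hr : ∀ p : Q.P, ((eV (Q.r p) : {v : Λ.V // v ∉ H}) : Λ.V)
        = Λ.r ((eP p : {p : Λ.P // Λ.s p ∉ H}) : Λ.P))
    (hd : ∀ p : Q.P, Q.d p = Λ.d ((eP p : {p : Λ.P // Λ.s p ∉ H}) : Λ.P))
    (hfinQ : Q.RowFinite) (w : Q.V) (m : Fin k → ℕ)
    {N : Type*} [AddCommMonoid N] (G : Λ.P → N)
    [DecidablePred fun p : Λ.P => Λ.s p ∉ H] :
    ∑ q ∈ (hfinQ w m).toFinset, G ((eP q : {p : Λ.P // Λ.s p ∉ H}) : Λ.P)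
      = ∑ p ∈ Finset.filter (fun p => Λ.s p ∉ H)
          ((hfin ((eV w : {v : Λ.V // v ∉ H}) : Λ.V) m).toFinset), G p := by
  refine Finset.sum_bij' (fun q _ => ((eP q : {p : Λ.P // Λ.s p ∉ H}) : Λ.P))
    (fun p hp => eP.symm ⟨p, (Finset.mem_filter.1 hp).2⟩) ?_ ?_ ?_ ?_ ?_
  · intro q hq
    rw [Set.Finite.mem_toFinset] at hq
    simp only [pathsSet, Set.mem_setOf_eq] at hq
    rw [Finset.mem_filter, Set.Finite.mem_toFinset]
    simp only [pathsSet, Set.mem_setOf_eq]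
    exact ⟨⟨by rw [← hr, hq.1], by rw [← hd, hq.2]⟩, (eP q).2⟩
  · intro p hp
    rw [Finset.mem_filter, Set.Finite.mem_toFinset] at hp
    simp only [pathsSet, Set.mem_setOf_eq] at hp
    rw [Set.Finite.mem_toFinset]
    simp only [pathsSet, Set.mem_setOf_eq]
    constructor
    · apply eV.injective
      apply Subtype.ext
      have h1 := hr (eP.symm ⟨p, hp.2⟩)
      rw [Equiv.apply_symm_apply] at h1
      rw [h1]
      exact hp.1.1
    · rw [hd (eP.symm ⟨p, hp.2⟩), Equiv.apply_symm_apply]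
      exact hp.1.2
  · intro q hq; simp
  · intro p hp; simp
  · intro q hq; rfl

open Classical in
/-- Values of the quotient map on generators. -/
noncomputable def phiGen (Λ : KGraph k) (H : Set Λ.V) (Q : KGraph k)
    (eV : Q.V ≃ {v : Λ.V // v ∉ H}) (hfinQ : Q.RowFinite) :
    Λ.V × (Fin k → ℤ) → Tal Q hfinQ :=
  fun q => if h : q.1 ∈ H then 0 else tmk Q hfinQ (Finsupp.single (eV.symm ⟨q.1, h⟩, q.2) 1)

/-- Values of the section on generators. -/
noncomputable def psiGen (Λ : KGraph k) (hfin : Λ.RowFinite) (H : Set Λ.V)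
    (Q : KGraph k) (eV : Q.V ≃ {v : Λ.V // v ∉ H}) :
    Q.V × (Fin k → ℤ) → (hCon Λ hfin H).Quotient :=
  fun q => (hCon Λ hfin H).mk'
    (tmk Λ hfin (Finsupp.single (((eV q.1 : {v : Λ.V // v ∉ H}) : Λ.V), q.2) 1))

end Aux15

end KGraph
namespace KGraph

section Aux15b

variable {k : ℕ}

lemma phi_ker (Λ : KGraph k) (hfin : Λ.RowFinite) (H : Set Λ.V)
    (hher : Hereditary Λ H)
    (Q : KGraph k) (eV : Q.V ≃ {v : Λ.V // v ∉ H}) (eP : Q.P ≃ {p : Λ.P // Λ.s p ∉ H})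
    (hr : ∀ p : Q.P, ((eV (Q.r p) : {v : Λ.V // v ∉ H}) : Λ.V)
        = Λ.r ((eP p : {p : Λ.P // Λ.s p ∉ H}) : Λ.P))
    (hs : ∀ p : Q.P, ((eV (Q.s p) : {v : Λ.V // v ∉ H}) : Λ.V)
        = Λ.s ((eP p : {p : Λ.P // Λ.s p ∉ H}) : Λ.P))
    (hd : ∀ p : Q.P, Q.d p = Λ.d ((eP p : {p : Λ.P // Λ.s p ∉ H}) : Λ.P))
    (hfinQ : Q.RowFinite) :
    TalCon Λ hfin ≤ AddCon.ker (genHom (phiGen Λ H Q eV hfinQ)) := by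
  classical
  apply AddCon.addConGen_le.2
  rintro a b ⟨v, n, i, rfl, rfl⟩
  rw [AddCon.ker_rel, genHom_single, map_sum]
  simp only [genHom_single]
  by_cases hv : v ∈ H
  · have h1 : phiGen Λ H Q eV hfinQ (v, n) = 0 := by
      simp only [phiGen]; exact dif_pos hv
    rw [h1]
    refine (Finset.sum_eq_zero fun p hp => ?_).symm
    rw [Set.Finite.mem_toFinset] at hp
    simp only [pathsSet, Set.mem_setOf_eq] at hp
    have hsp : Λ.s p ∈ H := hher p (by rw [hp.1]; exact hv)
    simp only [phiGen]
    exact dif_pos hsp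
  · have h1 : phiGen Λ H Q eV hfinQ (v, n)
        = tmk Q hfinQ (Finsupp.single (eV.symm ⟨v, hv⟩, n) 1) := by
      simp only [phiGen]; exact dif_neg hv
    rw [h1]
    have hterm : ∀ q ∈ (hfinQ (eV.symm ⟨v, hv⟩) (Pi.single i 1)).toFinset,
        phiGen Λ H Q eV hfinQ (Λ.s ((eP q : {p : Λ.P // Λ.s p ∉ H}) : Λ.P),
          n + Pi.single i 1)
          = tmk Q hfinQ (Finsupp.single (Q.s q, n + Pi.single i 1) 1) := by
      intro q _
      have h2 : phiGen Λ H Q eV hfinQ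
          (Λ.s ((eP q : {p : Λ.P // Λ.s p ∉ H}) : Λ.P), n + Pi.single i 1)
          = tmk Q hfinQ (Finsupp.single
              (eV.symm ⟨Λ.s ((eP q : {p : Λ.P // Λ.s p ∉ H}) : Λ.P), (eP q).2⟩,
                n + Pi.single i 1) 1) := by
        simp only [phiGen]; exact dif_neg (eP q).2
      rw [h2]
      have h3 : (⟨Λ.s ((eP q : {p : Λ.P // Λ.s p ∉ H}) : Λ.P), (eP q).2⟩
          : {v : Λ.V // v ∉ H}) = eV (Q.s q) := Subtype.ext (hs q).symm
      rw [h3, Equiv.symm_apply_apply]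
    have e1 : tmk Q hfinQ (Finsupp.single (eV.symm ⟨v, hv⟩, n) 1)
        = tmk Q hfinQ (∑ q ∈ (hfinQ (eV.symm ⟨v, hv⟩) (Pi.single i 1)).toFinset,
            Finsupp.single (Q.s q, n + Pi.single i 1) 1) :=
      tmk_eq_of_rel Q hfinQ ⟨eV.symm ⟨v, hv⟩, n, i, rfl, rfl⟩
    have e2 : tmk Q hfinQ (∑ q ∈ (hfinQ (eV.symm ⟨v, hv⟩) (Pi.single i 1)).toFinset,
            Finsupp.single (Q.s q, n + Pi.single i 1) 1)
        = ∑ q ∈ (hfinQ (eV.symm ⟨v, hv⟩) (Pi.single i 1)).toFinset,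
            tmk Q hfinQ (Finsupp.single (Q.s q, n + Pi.single i 1) 1) :=
      tmk_sum Q hfinQ _ _
    have e3 : ∑ q ∈ (hfinQ (eV.symm ⟨v, hv⟩) (Pi.single i 1)).toFinset,
            tmk Q hfinQ (Finsupp.single (Q.s q, n + Pi.single i 1) 1)
        = ∑ q ∈ (hfinQ (eV.symm ⟨v, hv⟩) (Pi.single i 1)).toFinset,
            phiGen Λ H Q eV hfinQ (Λ.s ((eP q : {p : Λ.P // Λ.s p ∉ H}) : Λ.P),
              n + Pi.single i 1) :=
      Finset.sum_congr rfl fun q hq => (hterm q hq).symm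
    have e4 := sum_key Λ hfin H Q eV eP hr hd hfinQ (eV.symm ⟨v, hv⟩) (Pi.single i 1)
      (fun p => phiGen Λ H Q eV hfinQ (Λ.s p, n + Pi.single i 1))
    rw [show ((eV (eV.symm ⟨v, hv⟩) : {v : Λ.V // v ∉ H}) : Λ.V) = v by
      rw [Equiv.apply_symm_apply]] at e4
    have e6 : ∑ p ∈ Finset.filter (fun p => ¬Λ.s p ∉ H) ((hfin v (Pi.single i 1)).toFinset),
        phiGen Λ H Q eV hfinQ (Λ.s p, n + Pi.single i 1) = 0 :=
      Finset.sum_eq_zero fun p hp => by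
        simp only [phiGen]
        exact dif_pos (not_not.mp (Finset.mem_filter.mp hp).2)
    have e5 : ∑ p ∈ Finset.filter (fun p => Λ.s p ∉ H) ((hfin v (Pi.single i 1)).toFinset),
          phiGen Λ H Q eV hfinQ (Λ.s p, n + Pi.single i 1)
        = ∑ p ∈ (hfin v (Pi.single i 1)).toFinset,
            phiGen Λ H Q eV hfinQ (Λ.s p, n + Pi.single i 1) := by
      rw [← Finset.sum_filter_add_sum_filter_not ((hfin v (Pi.single i 1)).toFinset)
        (fun p => Λ.s p ∉ H), e6, add_zero]
    exact (((e1.trans e2).trans e3).trans e4).trans e5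

lemma psi_ker (Λ : KGraph k) (hfin : Λ.RowFinite) (H : Set Λ.V)
    (Q : KGraph k) (eV : Q.V ≃ {v : Λ.V // v ∉ H}) (eP : Q.P ≃ {p : Λ.P // Λ.s p ∉ H})
    (hr : ∀ p : Q.P, ((eV (Q.r p) : {v : Λ.V // v ∉ H}) : Λ.V)
        = Λ.r ((eP p : {p : Λ.P // Λ.s p ∉ H}) : Λ.P))
    (hs : ∀ p : Q.P, ((eV (Q.s p) : {v : Λ.V // v ∉ H}) : Λ.V)
        = Λ.s ((eP p : {p : Λ.P // Λ.s p ∉ H}) : Λ.P))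
    (hd : ∀ p : Q.P, Q.d p = Λ.d ((eP p : {p : Λ.P // Λ.s p ∉ H}) : Λ.P))
    (hfinQ : Q.RowFinite) :
    TalCon Q hfinQ ≤ AddCon.ker (genHom (psiGen Λ hfin H Q eV)) := by
  classical
  apply AddCon.addConGen_le.2
  rintro a b ⟨w, n, i, rfl, rfl⟩
  rw [AddCon.ker_rel, genHom_single, map_sum]
  simp only [genHom_single, psiGen, hs]
  have e6 : ∀ x ∈ (∑ p ∈ Finset.filter (fun p => ¬Λ.s p ∉ H)
        ((hfin ((eV w : {v : Λ.V // v ∉ H}) : Λ.V) (Pi.single i 1)).toFinset),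
        Finsupp.single (Λ.s p, n + Pi.single i 1) (1 : ℕ)).support, x.1 ∈ H := by
    intro x hx
    obtain ⟨p, hp, hx2⟩ := Finset.mem_biUnion.mp (Finsupp.support_finset_sum hx)
    rw [Finsupp.support_single_ne_zero _ one_ne_zero, Finset.mem_singleton] at hx2
    rw [hx2]
    exact not_not.mp (Finset.mem_filter.mp hp).2
  have e1 : (hCon Λ hfin H).mk' (tmk Λ hfin
        (Finsupp.single (((eV w : {v : Λ.V // v ∉ H}) : Λ.V), n) 1))
      = (hCon Λ hfin H).mk' (tmk Λ hfin
        (∑ p ∈ Finset.filter (fun p => Λ.s p ∉ H)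
          ((hfin ((eV w : {v : Λ.V // v ∉ H}) : Λ.V) (Pi.single i 1)).toFinset),
          Finsupp.single (Λ.s p, n + Pi.single i 1) 1)) := by
    refine (hCon Λ hfin H).eq.2 ⟨0, mem_genIdeal_zero Λ hfin H,
      tmk Λ hfin (∑ p ∈ Finset.filter (fun p => ¬Λ.s p ∉ H)
        ((hfin ((eV w : {v : Λ.V // v ∉ H}) : Λ.V) (Pi.single i 1)).toFinset),
        Finsupp.single (Λ.s p, n + Pi.single i 1) 1),
      mem_genIdeal_of_support Λ hfin H _ e6, ?_⟩
    rw [add_zero]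
    refine Eq.trans (tmk_eq_of_rel Λ hfin
      ⟨((eV w : {v : Λ.V // v ∉ H}) : Λ.V), n, i, rfl, rfl⟩) ?_
    rw [← tmk_add]
    congr 1
    exact (Finset.sum_filter_add_sum_filter_not _ _ _).symm
  have e2 : (hCon Λ hfin H).mk' (tmk Λ hfin
        (∑ p ∈ Finset.filter (fun p => Λ.s p ∉ H)
          ((hfin ((eV w : {v : Λ.V // v ∉ H}) : Λ.V) (Pi.single i 1)).toFinset),
          Finsupp.single (Λ.s p, n + Pi.single i 1) 1))
      = ∑ p ∈ Finset.filter (fun p => Λ.s p ∉ H)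
          ((hfin ((eV w : {v : Λ.V // v ∉ H}) : Λ.V) (Pi.single i 1)).toFinset),
          (hCon Λ hfin H).mk' (tmk Λ hfin
            (Finsupp.single (Λ.s p, n + Pi.single i 1) 1)) := by
    rw [tmk_sum Λ hfin]
    exact map_sum (hCon Λ hfin H).mk' _ _
  have e3 := (sum_key Λ hfin H Q eV eP hr hd hfinQ w (Pi.single i 1)
    (fun p => (hCon Λ hfin H).mk' (tmk Λ hfin
      (Finsupp.single (Λ.s p, n + Pi.single i 1) 1)))).symm
  exact (e1.trans e2).trans e3

lemma n_ker (Q : KGraph k) (hfinQ : Q.RowFinite) (hnsQ : Q.NoSources) :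
    TalCon Q hfinQ ≤ AddCon.ker (genHom (fun _ : Q.V × (Fin k → ℤ) => (⊤ : ℕ∞))) := by
  apply AddCon.addConGen_le.2
  rintro a b ⟨w, n, i, rfl, rfl⟩
  rw [AddCon.ker_rel, genHom_single, map_sum]
  simp only [genHom_single]
  rw [Finset.sum_const]
  have hne : 0 < ((hfinQ w (Pi.single i 1)).toFinset).card := by
    rw [Finset.card_pos, Set.Finite.toFinset_nonempty]
    exact hnsQ w _
  have hcast : ((((hfinQ w (Pi.single i 1)).toFinset).card : ℕ∞)) ≠ 0 := by
    exact_mod_cast hne.ne'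
  rw [nsmul_eq_mul, ENat.mul_top hcast]

lemma tal_conical (Q : KGraph k) (hfinQ : Q.RowFinite) (hnsQ : Q.NoSources)
    (u u' : Tal Q hfinQ) (h : u + u' = 0) : u = 0 := by
  obtain ⟨c, rfl⟩ := tmk_surjective Q hfinQ u
  obtain ⟨c', rfl⟩ := tmk_surjective Q hfinQ u'
  have h2 : genHom (fun _ : Q.V × (Fin k → ℤ) => (⊤ : ℕ∞)) c
      + genHom (fun _ : Q.V × (Fin k → ℤ) => (⊤ : ℕ∞)) c' = 0 := by
    have h3 := congrArg
      ((TalCon Q hfinQ).lift (genHom (fun _ : Q.V × (Fin k → ℤ) => (⊤ : ℕ∞)))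
        (n_ker Q hfinQ hnsQ)) h
    rwa [map_add, lift_tmk, lift_tmk, map_zero] at h3
  have h4 : genHom (fun _ : Q.V × (Fin k → ℤ) => (⊤ : ℕ∞)) c = 0 := (add_eq_zero.mp h2).1
  have h5 : c = 0 := by
    by_contra hc
    obtain ⟨q, hq⟩ := Finsupp.support_nonempty_iff.mpr hc
    rw [genHom_apply, Finsupp.sum] at h4
    have h6 := (Finset.sum_eq_zero_iff).mp h4 q hq
    have hcq : c q ≠ 0 := Finsupp.mem_support_iff.mp hq
    rw [nsmul_eq_mul, ENat.mul_top (by exact_mod_cast hcq : ((c q : ℕ∞)) ≠ 0)] at h6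
    exact WithTop.top_ne_coe h6
  rw [h5, tmk_zero]

end Aux15b

end KGraph
namespace KGraph

section Aux15c

variable {k : ℕ}

/-- The induced hom `T_Λ →+ T_{Λ/H}`. -/
noncomputable def Phi (Λ : KGraph k) (hfin : Λ.RowFinite) (H : Set Λ.V)
    (hher : Hereditary Λ H)
    (Q : KGraph k) (eV : Q.V ≃ {v : Λ.V // v ∉ H}) (eP : Q.P ≃ {p : Λ.P // Λ.s p ∉ H})
    (hr : ∀ p : Q.P, ((eV (Q.r p) : {v : Λ.V // v ∉ H}) : Λ.V)
        = Λ.r ((eP p : {p : Λ.P // Λ.s p ∉ H}) : Λ.P))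
    (hs : ∀ p : Q.P, ((eV (Q.s p) : {v : Λ.V // v ∉ H}) : Λ.V)
        = Λ.s ((eP p : {p : Λ.P // Λ.s p ∉ H}) : Λ.P))
    (hd : ∀ p : Q.P, Q.d p = Λ.d ((eP p : {p : Λ.P // Λ.s p ∉ H}) : Λ.P))
    (hfinQ : Q.RowFinite) : Tal Λ hfin →+ Tal Q hfinQ :=
  (TalCon Λ hfin).lift (genHom (phiGen Λ H Q eV hfinQ))
    (phi_ker Λ hfin H hher Q eV eP hr hs hd hfinQ)

/-- The comparison hom `T_{Λ/H} →+ T_Λ/≡_H`. -/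
noncomputable def Psi (Λ : KGraph k) (hfin : Λ.RowFinite) (H : Set Λ.V)
    (Q : KGraph k) (eV : Q.V ≃ {v : Λ.V // v ∉ H}) (eP : Q.P ≃ {p : Λ.P // Λ.s p ∉ H})
    (hr : ∀ p : Q.P, ((eV (Q.r p) : {v : Λ.V // v ∉ H}) : Λ.V)
        = Λ.r ((eP p : {p : Λ.P // Λ.s p ∉ H}) : Λ.P))
    (hs : ∀ p : Q.P, ((eV (Q.s p) : {v : Λ.V // v ∉ H}) : Λ.V)
        = Λ.s ((eP p : {p : Λ.P // Λ.s p ∉ H}) : Λ.P))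
    (hd : ∀ p : Q.P, Q.d p = Λ.d ((eP p : {p : Λ.P // Λ.s p ∉ H}) : Λ.P))
    (hfinQ : Q.RowFinite) : Tal Q hfinQ →+ (hCon Λ hfin H).Quotient :=
  (TalCon Q hfinQ).lift (genHom (psiGen Λ hfin H Q eV))
    (psi_ker Λ hfin H Q eV eP hr hs hd hfinQ)

variable (Λ : KGraph k) (hfin : Λ.RowFinite) (H : Set Λ.V)
    (hher : Hereditary Λ H)
    (Q : KGraph k) (eV : Q.V ≃ {v : Λ.V // v ∉ H}) (eP : Q.P ≃ {p : Λ.P // Λ.s p ∉ H})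
    (hr : ∀ p : Q.P, ((eV (Q.r p) : {v : Λ.V // v ∉ H}) : Λ.V)
        = Λ.r ((eP p : {p : Λ.P // Λ.s p ∉ H}) : Λ.P))
    (hs : ∀ p : Q.P, ((eV (Q.s p) : {v : Λ.V // v ∉ H}) : Λ.V)
        = Λ.s ((eP p : {p : Λ.P // Λ.s p ∉ H}) : Λ.P))
    (hd : ∀ p : Q.P, Q.d p = Λ.d ((eP p : {p : Λ.P // Λ.s p ∉ H}) : Λ.P))
    (hfinQ : Q.RowFinite)

lemma Phi_not (v : Λ.V) (n : Fin k → ℤ) (hv : v ∉ H) :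
    Phi Λ hfin H hher Q eV eP hr hs hd hfinQ (tmk Λ hfin (Finsupp.single (v, n) 1))
      = tmk Q hfinQ (Finsupp.single (eV.symm ⟨v, hv⟩, n) 1) := by
  rw [Phi, lift_tmk, genHom_single]
  simp only [phiGen]
  exact dif_neg hv

lemma Phi_mem (v : Λ.V) (n : Fin k → ℤ) (hv : v ∈ H) :
    Phi Λ hfin H hher Q eV eP hr hs hd hfinQ (tmk Λ hfin (Finsupp.single (v, n) 1))
      = 0 := by
  rw [Phi, lift_tmk, genHom_single]
  simp only [phiGen]
  exact dif_pos hv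

lemma Phi_ideal (hnsQ : Q.NoSources) {x : Tal Λ hfin} (hx : x ∈ genIdeal Λ hfin H) :
    Phi Λ hfin H hher Q eV eP hr hs hd hfinQ x = 0 := by
  obtain ⟨b, hb, z, hz⟩ := hx
  have h1 : Phi Λ hfin H hher Q eV eP hr hs hd hfinQ x
      + Phi Λ hfin H hher Q eV eP hr hs hd hfinQ z = 0 := by
    rw [← map_add, hz, Phi, lift_tmk, genHom_apply, Finsupp.sum]
    refine Finset.sum_eq_zero fun q hq => ?_
    have h2 : phiGen Λ H Q eV hfinQ q = 0 := by
      simp only [phiGen]; exact dif_pos (hb q hq)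
    show b q • phiGen Λ H Q eV hfinQ q = 0
    rw [h2]
    exact nsmul_zero (b q)
  exact tal_conical Q hfinQ hnsQ _ _ h1

lemma Phi_surj : Function.Surjective (Phi Λ hfin H hher Q eV eP hr hs hd hfinQ) := by
  intro y
  obtain ⟨b, rfl⟩ := tmk_surjective Q hfinQ y
  induction b using Finsupp.induction with
  | zero => exact ⟨0, by rw [map_zero, tmk_zero]⟩
  | single_add q c b hqb hc ih =>
    obtain ⟨w, n⟩ := q
    obtain ⟨a, ha'⟩ := ih
    refine ⟨c • tmk Λ hfin (Finsupp.single (((eV w : {v : Λ.V // v ∉ H}) : Λ.V), n) 1)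
      + a, ?_⟩
    rw [map_add, map_nsmul, ha',
      Phi_not Λ hfin H hher Q eV eP hr hs hd hfinQ _ _ (eV w).2]
    rw [Subtype.coe_eta, Equiv.symm_apply_apply]
    rw [tmk_add Q hfinQ, ← tmk_nsmul Q hfinQ]
    congr 1
    rw [Finsupp.smul_single, smul_eq_mul, mul_one]

lemma PsiPhi (a : Tal Λ hfin) :
    Psi Λ hfin H Q eV eP hr hs hd hfinQ
        (Phi Λ hfin H hher Q eV eP hr hs hd hfinQ a)
      = (hCon Λ hfin H).mk' a := by
  obtain ⟨b, rfl⟩ := tmk_surjective Λ hfin a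
  induction b using Finsupp.induction with
  | zero => rw [tmk_zero, map_zero, map_zero, map_zero]
  | single_add q c b hqb hc ih =>
    obtain ⟨v, n⟩ := q
    rw [tmk_add, map_add, map_add, ih, map_add]
    congr 1
    have hsingle : (Finsupp.single ((v, n)) c : TalF Λ)
        = c • Finsupp.single ((v, n)) (1 : ℕ) := by
      rw [Finsupp.smul_single, smul_eq_mul, mul_one]
    rw [hsingle, tmk_nsmul, map_nsmul, map_nsmul, map_nsmul]
    congr 1
    by_cases hv : v ∈ H
    · rw [Phi_mem Λ hfin H hher Q eV eP hr hs hd hfinQ v n hv, map_zero]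
      refine (hCon_mk'_eq_zero Λ hfin H
        (mem_genIdeal_of_support Λ hfin H _ (fun x hx => ?_))).symm
      rw [Finsupp.support_single_ne_zero _ one_ne_zero, Finset.mem_singleton] at hx
      rw [hx]
      exact hv
    · rw [Phi_not Λ hfin H hher Q eV eP hr hs hd hfinQ v n hv]
      rw [Psi, lift_tmk, genHom_single]
      simp only [psiGen]
      rw [Equiv.apply_symm_apply]

end Aux15c

end KGraph
open KGraph in
/-- Let `Λ` be a row-finite `k`-graph with no sources, `H ⊆ Λ⁰` hereditary and
saturated, and let `Q` be the quotient `k`-graph `Λ/H` (identified, via `eV, eP`,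
with the vertices outside `H` and the paths with source outside `H`, with the
restricted structure maps). Then `Q` is again row-finite without sources, and
`T_{Λ/H} ≅ T_Λ/≡_H` as `ℤᵏ`-monoids, where `a ≡_H b` iff `a + x = b + y` for some
`x, y` in the `ℤᵏ`-order ideal `⟨H⟩`. -/
theorem stmt15 {k : ℕ} (Λ : KGraph k) (hfin : Λ.RowFinite) (hns : Λ.NoSources)
    (H : Set Λ.V) (hher : Hereditary Λ H) (hsat : Saturated Λ H)
    (Q : KGraph k)
    (eV : Q.V ≃ {v : Λ.V // v ∉ H})
    (eP : Q.P ≃ {p : Λ.P // Λ.s p ∉ H})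
    (hr : ∀ p : Q.P, ((eV (Q.r p) : {v : Λ.V // v ∉ H}) : Λ.V) = Λ.r ((eP p : {p : Λ.P // Λ.s p ∉ H}) : Λ.P))
    (hs : ∀ p : Q.P, ((eV (Q.s p) : {v : Λ.V // v ∉ H}) : Λ.V) = Λ.s ((eP p : {p : Λ.P // Λ.s p ∉ H}) : Λ.P))
    (hd : ∀ p : Q.P, Q.d p = Λ.d ((eP p : {p : Λ.P // Λ.s p ∉ H}) : Λ.P))
    (hident : ∀ v : Q.V, ((eP (Q.ident v) : {p : Λ.P // Λ.s p ∉ H}) : Λ.P)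
        = Λ.ident ((eV v : {v : Λ.V // v ∉ H}) : Λ.V))
    (hcomp : ∀ (p q : Q.P) (h : Q.s p = Q.r q)
        (h' : Λ.s ((eP p : {p : Λ.P // Λ.s p ∉ H}) : Λ.P)
            = Λ.r ((eP q : {p : Λ.P // Λ.s p ∉ H}) : Λ.P)),
        ((eP (Q.comp p q h) : {p : Λ.P // Λ.s p ∉ H}) : Λ.P)
          = Λ.comp ((eP p : {p : Λ.P // Λ.s p ∉ H}) : Λ.P)
              ((eP q : {p : Λ.P // Λ.s p ∉ H}) : Λ.P) h') :
    Q.RowFinite ∧ Q.NoSources ∧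
    ∀ hfinQ : Q.RowFinite,
      ∃ φ : Tal Λ hfin →+ Tal Q hfinQ,
        Function.Surjective φ ∧
        (∀ (v : Λ.V) (n : Fin k → ℤ) (hv : v ∉ H),
          φ (tmk Λ hfin (Finsupp.single (v, n) 1))
            = tmk Q hfinQ (Finsupp.single (eV.symm ⟨v, hv⟩, n) 1)) ∧
        (∀ (v : Λ.V) (n : Fin k → ℤ), v ∈ H →
          φ (tmk Λ hfin (Finsupp.single (v, n) 1)) = 0) ∧
        (∀ a b : Tal Λ hfin, φ a = φ b ↔
          ∃ x ∈ genIdeal Λ hfin H, ∃ y ∈ genIdeal Λ hfin H, a + x = b + y) := by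
  classical
  have hnsQ : Q.NoSources := by
    intro w n
    by_contra hempty
    have hv : ((eV w : {v : Λ.V // v ∉ H}) : Λ.V) ∈ H := by
      apply hsat _ n
      intro p hrp hdp
      by_contra hsp
      apply hempty
      refine ⟨eP.symm ⟨p, hsp⟩, ?_, ?_⟩
      · show Q.r _ = w
        apply eV.injective
        apply Subtype.ext
        rw [hr (eP.symm ⟨p, hsp⟩), Equiv.apply_symm_apply]
        exact hrp
      · show Q.d _ = n
        rw [hd (eP.symm ⟨p, hsp⟩), Equiv.apply_symm_apply]
        exact hdp
    exact (eV w).2 hv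
  have hfinQ' : Q.RowFinite := by
    intro w n
    have hsub : Q.pathsSet w n ⊆
        (fun q => ((eP q : {p : Λ.P // Λ.s p ∉ H}) : Λ.P)) ⁻¹'
          (Λ.pathsSet ((eV w : {v : Λ.V // v ∉ H}) : Λ.V) n) := by
      intro q hq
      simp only [pathsSet, Set.mem_setOf_eq] at hq
      simp only [Set.mem_preimage, pathsSet, Set.mem_setOf_eq]
      exact ⟨by rw [← hr, hq.1], by rw [← hd, hq.2]⟩
    exact Set.Finite.subset (Set.Finite.preimage
      ((Subtype.val_injective.comp eP.injective).injOn) (hfin _ n)) hsub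
  refine ⟨hfinQ', hnsQ, ?_⟩
  intro hfinQ
  refine ⟨Phi Λ hfin H hher Q eV eP hr hs hd hfinQ,
    Phi_surj Λ hfin H hher Q eV eP hr hs hd hfinQ,
    fun v n hv => Phi_not Λ hfin H hher Q eV eP hr hs hd hfinQ v n hv,
    fun v n hv => Phi_mem Λ hfin H hher Q eV eP hr hs hd hfinQ v n hv,
    fun a b => ⟨?_, ?_⟩⟩
  · intro hab
    have h1 : (hCon Λ hfin H).mk' a = (hCon Λ hfin H).mk' b := by
      rw [← PsiPhi Λ hfin H hher Q eV eP hr hs hd hfinQ a,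
        ← PsiPhi Λ hfin H hher Q eV eP hr hs hd hfinQ b, hab]
    exact (hCon_eq Λ hfin H).mp h1
  · rintro ⟨x, hx, y, hy, hxy⟩
    have h2 : Phi Λ hfin H hher Q eV eP hr hs hd hfinQ (a + x)
        = Phi Λ hfin H hher Q eV eP hr hs hd hfinQ (b + y) := by rw [hxy]
    rwa [map_add, map_add,
      Phi_ideal Λ hfin H hher Q eV eP hr hs hd hfinQ hnsQ hx,
      Phi_ideal Λ hfin H hher Q eV eP hr hs hd hfinQ hnsQ hy,
      add_zero, add_zero] at h2
end

section
/- Let Λ be a row-finite k-graph with no sources. If the talented monoid T_Λ is atomic, then it is a unique factorization monoid: every decomposition of an element of T_Λ as a finite sum of atoms is unique up to permutation of the atoms. -/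
namespace KGraphAux

open Finsupp

variable {α : Type*}

/-- Riesz decomposition in `α →₀ ℕ`. -/
theorem riesz (x1 x2 a a' : α →₀ ℕ) (h : x1 + x2 = a + a') :
    ∃ b11 b12 b21 b22 : α →₀ ℕ,
      x1 = b11 + b12 ∧ x2 = b21 + b22 ∧ a = b11 + b21 ∧ a' = b12 + b22 := by
  refine ⟨x1 ⊓ a, x1 - x1 ⊓ a, a - x1 ⊓ a, x2 - (a - x1 ⊓ a), ?_, ?_, ?_, ?_⟩ <;>
    ext x <;>
    have hx := congrArg (fun f : α →₀ ℕ => f x) h <;>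
    simp only [Finsupp.add_apply, Finsupp.tsub_apply, Finsupp.inf_apply] at hx ⊢ <;>
    omega

theorem add_eq_single (a a' : α →₀ ℕ) (q : α) (h : a + a' = Finsupp.single q 1) :
    (a = Finsupp.single q 1 ∧ a' = 0) ∨ (a = 0 ∧ a' = Finsupp.single q 1) := by
  classical
  have key : ∀ x, a x + a' x = (Finsupp.single q 1) x := fun x => by
    rw [← Finsupp.add_apply, h]
  rcases Nat.eq_zero_or_pos (a q) with h0 | h1
  · right
    constructor
    · ext x
      have hx := key x
      rw [Finsupp.single_apply] at hx
      by_cases hxq : q = x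
      · subst hxq; simpa using h0
      · simp only [if_neg hxq] at hx; simpa using by omega
    · ext x
      have hx := key x
      rw [Finsupp.single_apply] at hx
      rw [Finsupp.single_apply]
      by_cases hxq : q = x
      · subst hxq; simp only [if_pos rfl] at hx ⊢; omega
      · simp only [if_neg hxq] at hx ⊢; omega
  · left
    have hq : a q + a' q = 1 := by simpa using key q
    constructor
    · ext x
      have hx := key x
      rw [Finsupp.single_apply] at hx
      rw [Finsupp.single_apply]
      by_cases hxq : q = x
      · subst hxq; simp only [if_pos rfl] at hx ⊢; omega
      · simp only [if_neg hxq] at hx ⊢; omega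
    · ext x
      have hx := key x
      rw [Finsupp.single_apply] at hx
      by_cases hxq : q = x
      · subst hxq; simp only [if_pos rfl] at hx; simpa using by omega
      · simp only [if_neg hxq] at hx; simpa using by omega

theorem single_decomp (c : α →₀ ℕ) (q : α) (hq : c q ≠ 0) :
    c = Finsupp.single q 1 + (c - Finsupp.single q 1) := by
  classical
  ext x
  rw [Finsupp.add_apply, Finsupp.tsub_apply, Finsupp.single_apply]
  by_cases hxq : q = x
  · subst hxq; rw [if_pos rfl]; omega
  · rw [if_neg hxq]; omega

theorem add_eq_zero' (a b : α →₀ ℕ) (h : a + b = 0) : a = 0 ∧ b = 0 := by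
  constructor <;> ext x <;>
    have hx := congrArg (fun f : α →₀ ℕ => f x) h <;>
    simp only [Finsupp.add_apply, Finsupp.coe_zero, Pi.zero_apply] at hx ⊢ <;> omega

theorem toFinset_congr {s t : Set α} (h : s = t) (hs : s.Finite) (ht : t.Finite) :
    hs.toFinset = ht.toFinset := by
  subst h; rfl

theorem sum_single_ne_zero {β : Type*} (F : Finset β) (hF : F.Nonempty) (g : β → α) :
    (∑ p ∈ F, Finsupp.single (g p) (1 : ℕ)) ≠ 0 := by
  obtain ⟨p0, hp0⟩ := hF
  intro h
  have h2 := congrArg (fun f : α →₀ ℕ => f (g p0)) h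
  simp only [Finsupp.finset_sum_apply, Finsupp.coe_zero, Pi.zero_apply] at h2
  have h3 : (Finsupp.single (g p0) (1 : ℕ)) (g p0) ≤
      ∑ p ∈ F, (Finsupp.single (g p) (1 : ℕ)) (g p0) :=
    Finset.single_le_sum (f := fun p => (Finsupp.single (g p) (1:ℕ)) (g p0))
      (fun i _ => Nat.zero_le _) hp0
  rw [h2] at h3
  simp at h3

theorem sum_singleton_list (Qs : List α) :
    ((Qs.map (fun q => ({q} : Multiset α))).sum) = (Qs : Multiset α) := by
  induction Qs with
  | nil => simp
  | cons q Qs ih =>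
    simp only [List.map_cons, List.sum_cons, ih]
    rfl

end KGraphAux

namespace KGraph

open KGraphAux

variable {k : ℕ} (Λ : KGraph k) (hfin : Λ.RowFinite)

/-- The one-step expansion of the generator `v(n)` in direction `i`. -/
noncomputable def Eexp (v : Λ.V) (n : Fin k → ℤ) (i : Fin k) : TalF Λ :=
  ∑ p ∈ (hfin v (Pi.single i 1)).toFinset,
    Finsupp.single (Λ.s p, n + Pi.single i 1) 1

/-- Parallel rewriting relation on the free monoid. -/
inductive Pa : TalF Λ → TalF Λ → Prop
  | base (v n i) : Pa (Finsupp.single (v, n) 1) (Eexp Λ hfin v n i)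
  | refl (a) : Pa a a
  | add {a b c d} : Pa a b → Pa c d → Pa (a + c) (b + d)

variable {Λ hfin}

theorem Pa_tmk {a b : TalF Λ} (h : Pa Λ hfin a b) : TalCon Λ hfin a b := by
  induction h with
  | base v n i => exact AddConGen.Rel.of _ _ ⟨v, n, i, rfl, rfl⟩
  | refl a => exact (TalCon Λ hfin).refl a
  | add h1 h2 ih1 ih2 => exact (TalCon Λ hfin).add ih1 ih2

theorem Pa_zero {a b : TalF Λ} (h : Pa Λ hfin a b) (ha : a = 0) : b = 0 := by
  induction h with
  | base v n i =>
    exact absurd (Finsupp.single_eq_zero.mp ha) one_ne_zero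
  | refl a => exact ha
  | add h1 h2 ih1 ih2 =>
    obtain ⟨h1', h2'⟩ := add_eq_zero' _ _ ha
    rw [ih1 h1', ih2 h2', add_zero]

theorem mem_pf {v : Λ.V} {m : Fin k → ℕ} {p : Λ.P} (h : p ∈ (hfin v m).toFinset) :
    Λ.r p = v ∧ Λ.d p = m := by
  rw [Set.Finite.mem_toFinset] at h; exact h

theorem mem_pf' {v : Λ.V} {m : Fin k → ℕ} {p : Λ.P} (h1 : Λ.r p = v) (h2 : Λ.d p = m) :
    p ∈ (hfin v m).toFinset := by
  rw [Set.Finite.mem_toFinset]; exact ⟨h1, h2⟩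

theorem Eexp_ne_zero (hns : Λ.NoSources) (v : Λ.V) (n : Fin k → ℤ) (i : Fin k) :
    Eexp Λ hfin v n i ≠ 0 := by
  apply sum_single_ne_zero
  rw [Set.Finite.toFinset_nonempty]
  exact hns v _

theorem Pa_ne_zero (hns : Λ.NoSources) {a b : TalF Λ} (h : Pa Λ hfin a b) (ha : a ≠ 0) :
    b ≠ 0 := by
  induction h with
  | base v n i => exact Eexp_ne_zero hns v n i
  | refl a => exact ha
  | @add x1 y1 x2 y2 h1 h2 ih1 ih2 =>
    intro hbd
    obtain ⟨hb, hd⟩ := add_eq_zero' _ _ hbd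
    apply ha
    have hx1 : x1 = 0 := by by_contra h; exact ih1 h hb
    have hx2 : x2 = 0 := by by_contra h; exact ih2 h hd
    rw [hx1, hx2, add_zero]

theorem Pa_split {x y : TalF Λ} (h : Pa Λ hfin x y) :
    ∀ a a', x = a + a' → ∃ d d', y = d + d' ∧ Pa Λ hfin a d ∧ Pa Λ hfin a' d' := by
  induction h with
  | base v n i =>
    intro a a' hx
    rcases add_eq_single a a' (v, n) hx.symm with ⟨h1, h2⟩ | ⟨h1, h2⟩
    · subst h1; subst h2
      exact ⟨Eexp Λ hfin v n i, 0, (add_zero _).symm, Pa.base v n i, Pa.refl 0⟩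
    · subst h1; subst h2
      exact ⟨0, Eexp Λ hfin v n i, (zero_add _).symm, Pa.refl 0, Pa.base v n i⟩
  | refl a =>
    intro a1 a2 hx
    exact ⟨a1, a2, hx, Pa.refl a1, Pa.refl a2⟩
  | @add x1 y1 x2 y2 h1 h2 ih1 ih2 =>
    intro a a' hx
    obtain ⟨b11, b12, b21, b22, e1, e2, e3, e4⟩ := riesz x1 x2 a a' hx
    obtain ⟨d11, d12, hy1, p11, p12⟩ := ih1 b11 b12 e1
    obtain ⟨d21, d22, hy2, p21, p22⟩ := ih2 b21 b22 e2
    refine ⟨d11 + d21, d12 + d22, ?_, ?_, ?_⟩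
    · rw [hy1, hy2]; abel
    · rw [e3]; exact Pa.add p11 p21
    · rw [e4]; exact Pa.add p12 p22

theorem Pa_single_inv {x c : TalF Λ} (h : Pa Λ hfin x c) :
    ∀ v n, x = Finsupp.single (v, n) 1 →
      c = Finsupp.single (v, n) 1 ∨ ∃ i, c = Eexp Λ hfin v n i := by
  induction h with
  | base v' n' i =>
    intro v n hx
    have hpair : (v', n') = (v, n) := Finsupp.single_left_injective one_ne_zero hx
    rw [Prod.mk.injEq] at hpair
    right
    exact ⟨i, by rw [hpair.1, hpair.2]⟩
  | refl a => intro v n hx; left; exact hx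
  | @add x1 y1 x2 y2 h1 h2 ih1 ih2 =>
    intro v n hx
    rcases add_eq_single x1 x2 (v, n) hx with ⟨e1, e2⟩ | ⟨e1, e2⟩
    · have hc2 : y2 = 0 := Pa_zero h2 e2
      rw [hc2, add_zero]
      exact ih1 v n e1
    · have hc1 : y1 = 0 := Pa_zero h1 e1
      rw [hc1, zero_add]
      exact ih2 v n e2

theorem Pa_sum {β : Type*} (F : Finset β) (f g : β → TalF Λ)
    (h : ∀ t ∈ F, Pa Λ hfin (f t) (g t)) : Pa Λ hfin (∑ t ∈ F, f t) (∑ t ∈ F, g t) := by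
  classical
  induction F using Finset.induction_on with
  | empty => simpa using Pa.refl (0 : TalF Λ)
  | @insert a s hnotmem ih =>
    rw [Finset.sum_insert hnotmem, Finset.sum_insert hnotmem]
    exact Pa.add (h _ (Finset.mem_insert_self _ _))
      (ih fun t ht => h t (Finset.mem_insert_of_mem ht))

/-- The double expansion. -/
noncomputable def Dexp (Λ : KGraph k) (hfin : Λ.RowFinite) (v : Λ.V) (n : Fin k → ℤ)
    (i j : Fin k) : TalF Λ :=
  ∑ w ∈ (hfin v (Pi.single i 1 + Pi.single j 1)).toFinset,
    Finsupp.single (Λ.s w, n + Pi.single i 1 + Pi.single j 1) 1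

theorem comm_lemma (v : Λ.V) (n : Fin k → ℤ) (i j : Fin k) :
    ∑ p ∈ (hfin v (Pi.single i 1)).toFinset,
      Eexp Λ hfin (Λ.s p) (n + Pi.single i 1) j = Dexp Λ hfin v n i j := by
  classical
  unfold Eexp Dexp
  rw [Finset.sum_sigma']
  refine Finset.sum_bij
    (fun x hx => Λ.comp x.1 x.2 ((mem_pf (hfin := hfin) (Finset.mem_sigma.mp hx).2).1.symm))
    ?_ ?_ ?_ ?_
  · intro x hx
    obtain ⟨hx1, hx2⟩ := Finset.mem_sigma.mp hx
    obtain ⟨hr1, hd1⟩ := mem_pf (hfin := hfin) hx1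
    obtain ⟨hr2, hd2⟩ := mem_pf (hfin := hfin) hx2
    refine mem_pf' (hfin := hfin) ?_ ?_
    · rw [Λ.r_comp, hr1]
    · rw [Λ.d_comp, hd1, hd2]
  · intro x1 hx1 x2 hx2 heq
    obtain ⟨hx11, hx12⟩ := Finset.mem_sigma.mp hx1
    obtain ⟨hx21, hx22⟩ := Finset.mem_sigma.mp hx2
    set w := Λ.comp x1.1 x1.2 ((mem_pf (hfin := hfin) hx12).1.symm) with hw
    have hdw : Λ.d w = Pi.single i 1 + Pi.single j 1 := by
      rw [hw, Λ.d_comp, (mem_pf (hfin := hfin) hx11).2, (mem_pf (hfin := hfin) hx12).2]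
    obtain ⟨qt, -, huniq⟩ := Λ.factor w _ _ hdw
    have e1 : (x1.1, x1.2) = qt :=
      huniq _ ⟨(mem_pf (hfin := hfin) hx12).1.symm, rfl, (mem_pf (hfin := hfin) hx11).2, (mem_pf (hfin := hfin) hx12).2⟩
    have e2 : (x2.1, x2.2) = qt :=
      huniq _ ⟨(mem_pf (hfin := hfin) hx22).1.symm, heq.symm, (mem_pf (hfin := hfin) hx21).2, (mem_pf (hfin := hfin) hx22).2⟩
    have e3 : (x1.1, x1.2) = (x2.1, x2.2) := e1.trans e2.symm
    rw [Prod.mk.injEq] at e3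
    exact Sigma.ext e3.1 (heq_of_eq e3.2)
  · intro w hw
    obtain ⟨hrw, hdw⟩ := mem_pf (hfin := hfin) hw
    obtain ⟨⟨p, p'⟩, ⟨hcomp, hc, hdp, hdp'⟩, -⟩ := Λ.factor w _ _ hdw
    have hrp : Λ.r p = v := by rw [← hc, Λ.r_comp] at hrw; exact hrw
    have hmem1 : p ∈ (hfin v (Pi.single i 1)).toFinset := mem_pf' (hfin := hfin) hrp hdp
    have hmem2 : p' ∈ (hfin (Λ.s p) (Pi.single j 1)).toFinset := mem_pf' (hfin := hfin) hcomp.symm hdp'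
    refine ⟨⟨p, p'⟩, Finset.mem_sigma.mpr ⟨hmem1, hmem2⟩, hc⟩
  · intro x hx
    rw [Λ.s_comp]

theorem Eexp_Pa_Dexp (v : Λ.V) (n : Fin k → ℤ) (i j : Fin k) :
    Pa Λ hfin (Eexp Λ hfin v n i) (Dexp Λ hfin v n i j) := by
  rw [← comm_lemma v n i j]
  unfold Eexp
  exact Pa_sum _ _ _ fun p _ => Pa.base (Λ.s p) (n + Pi.single i 1) j

theorem Dexp_comm (v : Λ.V) (n : Fin k → ℤ) (i j : Fin k) :
    Dexp Λ hfin v n i j = Dexp Λ hfin v n j i := by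
  unfold Dexp
  rw [toFinset_congr (show Λ.pathsSet v (Pi.single i 1 + Pi.single j 1) =
      Λ.pathsSet v (Pi.single j 1 + Pi.single i 1) by rw [add_comm]) (hfin _ _) (hfin _ _)]
  exact Finset.sum_congr rfl fun w _ => by rw [add_right_comm]

theorem Pa_diamond {a b c : TalF Λ} (h1 : Pa Λ hfin a b) (h2 : Pa Λ hfin a c) :
    ∃ d, Pa Λ hfin b d ∧ Pa Λ hfin c d := by
  induction h1 generalizing c with
  | base v n i =>
    rcases Pa_single_inv h2 v n rfl with rfl | ⟨j, rfl⟩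
    · exact ⟨Eexp Λ hfin v n i, Pa.refl _, Pa.base v n i⟩
    · refine ⟨Dexp Λ hfin v n i j, Eexp_Pa_Dexp v n i j, ?_⟩
      rw [Dexp_comm]
      exact Eexp_Pa_Dexp v n j i
  | refl a => exact ⟨c, h2, Pa.refl c⟩
  | add ha hb iha ihb =>
    obtain ⟨c1, c2, rfl, hc1, hc2⟩ := Pa_split h2 _ _ rfl
    obtain ⟨d1, hd11, hd12⟩ := iha hc1
    obtain ⟨d2, hd21, hd22⟩ := ihb hc2
    exact ⟨d1 + d2, Pa.add hd11 hd21, Pa.add hd12 hd22⟩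

/-- The reflexive transitive closure of parallel rewriting. -/
def Reaches (Λ : KGraph k) (hfin : Λ.RowFinite) : TalF Λ → TalF Λ → Prop :=
  Relation.ReflTransGen (Pa Λ hfin)

theorem join_equiv : Equivalence (Relation.Join (Reaches Λ hfin)) :=
  Relation.equivalence_join_reflTransGen fun _ _ _ hab hac =>
    let ⟨d, hbd, hcd⟩ := Pa_diamond hab hac
    ⟨d, Relation.ReflGen.single hbd, Relation.ReflTransGen.single hcd⟩

theorem Reaches_add {a b c d : TalF Λ} (h1 : Reaches Λ hfin a b) (h2 : Reaches Λ hfin c d) :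
    Reaches Λ hfin (a + c) (b + d) := by
  have s1 : Reaches Λ hfin (a + c) (b + c) :=
    Relation.ReflTransGen.lift (fun x => x + c) (fun x y h => Pa.add h (Pa.refl c)) _ _ h1
  have s2 : Reaches Λ hfin (b + c) (b + d) :=
    Relation.ReflTransGen.lift (fun x => b + x) (fun x y h => Pa.add (Pa.refl b) h) _ _ h2
  exact s1.trans s2

/-- The join congruence. -/
noncomputable def joinCon (Λ : KGraph k) (hfin : Λ.RowFinite) : AddCon (TalF Λ) where
  r := Relation.Join (Reaches Λ hfin)
  iseqv := join_equiv
  add' := fun ⟨e, h1, h2⟩ ⟨f, h3, h4⟩ => ⟨e + f, Reaches_add h1 h3, Reaches_add h2 h4⟩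

theorem talCon_le_join : TalCon Λ hfin ≤ joinCon Λ hfin := by
  apply AddCon.addConGen_le.mpr
  rintro x y ⟨v, n, i, rfl, rfl⟩
  exact ⟨Eexp Λ hfin v n i, Relation.ReflTransGen.single (Pa.base v n i),
    Relation.ReflTransGen.refl⟩

theorem tal_join {a b : TalF Λ} (h : TalCon Λ hfin a b) :
    Relation.Join (Reaches Λ hfin) a b :=
  AddCon.le_def.mp talCon_le_join h

theorem tmk_eq_iff {a b : TalF Λ} : tmk Λ hfin a = tmk Λ hfin b ↔ TalCon Λ hfin a b :=
  AddCon.eq _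

theorem Reaches_tmk {a b : TalF Λ} (h : Reaches Λ hfin a b) : tmk Λ hfin a = tmk Λ hfin b := by
  induction h with
  | refl => rfl
  | tail _ hbc ih => exact ih.trans (tmk_eq_iff.mpr (Pa_tmk hbc))

theorem Reaches_zero {c : TalF Λ} (h : Reaches Λ hfin 0 c) : c = 0 := by
  induction h with
  | refl => rfl
  | tail _ hbc ih => exact Pa_zero hbc ih

theorem Reaches_ne_zero (hns : Λ.NoSources) {a b : TalF Λ} (h : Reaches Λ hfin a b)
    (ha : a ≠ 0) : b ≠ 0 := by
  induction h with
  | refl => exact ha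
  | tail _ hbc ih => exact Pa_ne_zero hns hbc ih

theorem tmk_zero_s17 {a : TalF Λ} (hns : Λ.NoSources) (h : tmk Λ hfin a = 0) : a = 0 := by
  have h0 : tmk Λ hfin a = tmk Λ hfin 0 := by
    rw [h]; exact (map_zero ((TalCon Λ hfin).mk')).symm
  obtain ⟨c, hac, h0c⟩ := tal_join (tmk_eq_iff.mp h0)
  have hc : c = 0 := Reaches_zero h0c
  subst hc
  by_contra ha
  exact Reaches_ne_zero hns hac ha rfl

theorem Reaches_split {x c : TalF Λ} (h : Reaches Λ hfin x c) :
    ∀ a a', x = a + a' → ∃ d d', c = d + d' ∧ Reaches Λ hfin a d ∧ Reaches Λ hfin a' d' := by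
  induction h with
  | refl =>
    intro a a' hx
    exact ⟨a, a', hx, Relation.ReflTransGen.refl, Relation.ReflTransGen.refl⟩
  | tail _ hbc ih =>
    intro a a' hx
    obtain ⟨d, d', rfl, hd, hd'⟩ := ih a a' hx
    obtain ⟨e, e', he, pe, pe'⟩ := Pa_split hbc d d' rfl
    exact ⟨e, e', he, hd.tail pe, hd'.tail pe'⟩

theorem Reaches_split_list :
    ∀ (As : List (TalF Λ)) (c : TalF Λ), Reaches Λ hfin As.sum c →
      ∃ Cs : List (TalF Λ), List.Forall₂ (Reaches Λ hfin) As Cs ∧ Cs.sum = c := by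
  intro As
  induction As with
  | nil =>
    intro c hc
    rw [List.sum_nil] at hc
    exact ⟨[], List.Forall₂.nil, (Reaches_zero hc).symm⟩
  | cons a As ih =>
    intro c hc
    rw [List.sum_cons] at hc
    obtain ⟨d, d', rfl, hd, hd'⟩ := Reaches_split hc a As.sum rfl
    obtain ⟨Cs, hF, hCs⟩ := ih d' hd'
    exact ⟨d :: Cs, List.Forall₂.cons hd hF, by rw [List.sum_cons, hCs]⟩

theorem atom_single (hns : Λ.NoSources) {a : Tal Λ hfin} {c : TalF Λ}
    (hc : tmk Λ hfin c = a) (ha : a ≠ 0)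
    (hat : ∀ b c' : Tal Λ hfin, a = b + c' → b = 0 ∨ c' = 0) :
    ∃ q, c = Finsupp.single q 1 ∧ a = tmk Λ hfin (Finsupp.single q 1) := by
  have hc0 : c ≠ 0 := by
    rintro rfl
    apply ha
    rw [← hc]
    exact map_zero ((TalCon Λ hfin).mk')
  obtain ⟨q, hq⟩ := Finsupp.support_nonempty_iff.mpr hc0
  have hqne : c q ≠ 0 := Finsupp.mem_support_iff.mp hq
  have hdec := single_decomp c q hqne
  have hsplit : a = tmk Λ hfin (Finsupp.single q 1) + tmk Λ hfin (c - Finsupp.single q 1) := by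
    rw [← hc]
    conv_lhs => rw [hdec]
    exact map_add ((TalCon Λ hfin).mk') _ _
  rcases hat _ _ hsplit with h1 | h1
  · exact absurd (Finsupp.single_eq_zero.mp (tmk_zero_s17 hns h1)) one_ne_zero
  · have : c - Finsupp.single q 1 = 0 := tmk_zero_s17 hns h1
    rw [this, add_zero] at hdec
    refine ⟨q, hdec, ?_⟩
    rw [hsplit, h1, add_zero]

theorem extract (hns : Λ.NoSources) (rep : Tal Λ hfin → TalF Λ)
    (hrep : ∀ x, tmk Λ hfin (rep x) = x) :
    ∀ (L : List (Tal Λ hfin)) (Cs : List (TalF Λ)),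
      (∀ a ∈ L, a ≠ 0 ∧ ∀ b c : Tal Λ hfin, a = b + c → b = 0 ∨ c = 0) →
      List.Forall₂ (Reaches Λ hfin) (L.map rep) Cs →
      ∃ Qs : List (Λ.V × (Fin k → ℤ)),
        Cs = Qs.map (fun q => Finsupp.single q 1) ∧
        L = Qs.map (fun q => tmk Λ hfin (Finsupp.single q 1)) := by
  intro L
  induction L with
  | nil =>
    intro Cs _ hF
    rw [List.map_nil] at hF
    cases hF
    exact ⟨[], rfl, rfl⟩
  | cons a L ih =>
    intro Cs hat hF
    rw [List.map_cons] at hF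
    cases hF with
    | cons hc hrest =>
      rename_i c Cs'
      have hck : tmk Λ hfin c = a := by
        rw [← Reaches_tmk hc, hrep]
      obtain ⟨ha0, haat⟩ := hat a List.mem_cons_self
      obtain ⟨q, rfl, haq⟩ := atom_single hns hck ha0 haat
      obtain ⟨Qs, rfl, hL⟩ := ih Cs' (fun x hx => hat x (List.mem_cons_of_mem _ hx)) hrest
      exact ⟨q :: Qs, by rw [List.map_cons], by rw [List.map_cons, ← hL, ← haq]⟩

end KGraph

open KGraph in
/-- For a row-finite `k`-graph `Λ` with no sources, if the talented monoid `T_Λ`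
is atomic then it is a unique factorization monoid: decompositions into sums of
atoms are unique up to permutation (i.e. as multisets). -/
theorem stmt17 {k : ℕ} (Λ : KGraph k) (hfin : Λ.RowFinite) (hns : Λ.NoSources)
    (hatomic : ∀ x : Tal Λ hfin, x ≠ 0 → ∃ l : Multiset (Tal Λ hfin),
      (∀ a ∈ l, a ≠ 0 ∧ ∀ b c : Tal Λ hfin, a = b + c → b = 0 ∨ c = 0) ∧
      l.sum = x) :
    ∀ l l' : Multiset (Tal Λ hfin),
      (∀ a ∈ l, a ≠ 0 ∧ ∀ b c : Tal Λ hfin, a = b + c → b = 0 ∨ c = 0) →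
      (∀ a ∈ l', a ≠ 0 ∧ ∀ b c : Tal Λ hfin, a = b + c → b = 0 ∨ c = 0) →
      l.sum = l'.sum → l = l' := by
  classical
  intro l l' hl hl' hsum
  choose rep hrep using (AddCon.mk'_surjective (c := TalCon Λ hfin))
  have hsum1 : ∀ m : Multiset (Tal Λ hfin),
      tmk Λ hfin ((m.toList.map rep).sum) = m.sum := by
    intro m
    have h1 := map_list_sum ((TalCon Λ hfin).mk') (m.toList.map rep)
    rw [List.map_map] at h1
    have h2 : ((TalCon Λ hfin).mk' ∘ rep) = id := funext hrep
    rw [h2, List.map_id] at h1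
    exact h1.trans (Multiset.sum_toList m)
  have heq : tmk Λ hfin ((l.toList.map rep).sum) = tmk Λ hfin ((l'.toList.map rep).sum) := by
    rw [hsum1, hsum1, hsum]
  obtain ⟨c, hBc, hB'c⟩ := tal_join (tmk_eq_iff.mp heq)
  obtain ⟨Cs, hF, hCs⟩ := Reaches_split_list (l.toList.map rep) c hBc
  obtain ⟨Cs', hF', hCs'⟩ := Reaches_split_list (l'.toList.map rep) c hB'c
  obtain ⟨Qs, hQ1, hQ2⟩ := extract hns rep hrep l.toList Cs
    (fun a ha => hl a (Multiset.mem_toList.mp ha)) hF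
  obtain ⟨Qs', hQ1', hQ2'⟩ := extract hns rep hrep l'.toList Cs'
    (fun a ha => hl' a (Multiset.mem_toList.mp ha)) hF'
  have hcsum : (Qs.map (fun q => Finsupp.single q (1 : ℕ))).sum
      = (Qs'.map (fun q => Finsupp.single q (1 : ℕ))).sum := by
    rw [← hQ1, ← hQ1', hCs, hCs']
  have hmult : (Qs : Multiset (Λ.V × (Fin k → ℤ))) = (Qs' : Multiset _) := by
    have h1 := congrArg Finsupp.toMultiset hcsum
    rw [map_list_sum Finsupp.toMultiset, map_list_sum Finsupp.toMultiset,
      List.map_map, List.map_map] at h1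
    have h2 : (Finsupp.toMultiset ∘ fun q : Λ.V × (Fin k → ℤ) => Finsupp.single q (1 : ℕ))
        = fun q => ({q} : Multiset _) := by
      funext q
      simp [Finsupp.toMultiset_single]
    rw [h2, KGraphAux.sum_singleton_list, KGraphAux.sum_singleton_list] at h1
    exact h1
  calc l = (l.toList : Multiset _) := (Multiset.coe_toList l).symm
    _ = ((Qs.map fun q => tmk Λ hfin (Finsupp.single q 1) : List _) : Multiset _) := by
          rw [← hQ2]
    _ = Multiset.map (fun q => tmk Λ hfin (Finsupp.single q 1)) (Qs : Multiset _) :=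
          (Multiset.map_coe _ Qs).symm
    _ = Multiset.map (fun q => tmk Λ hfin (Finsupp.single q 1)) (Qs' : Multiset _) := by
          rw [hmult]
    _ = ((Qs'.map fun q => tmk Λ hfin (Finsupp.single q 1) : List _) : Multiset _) :=
          Multiset.map_coe _ Qs'
    _ = (l'.toList : Multiset _) := by rw [← hQ2']
    _ = l' := Multiset.coe_toList l'
end

section
/- Let Λ = Ω_k be the infinite grid k-graph: objects ℕ^k, morphisms {(m,n) : m ≤ n} with r(m,n)=m, s(m,n)=n, d(m,n)=n−m. Then its talented monoid T_{Ω_k} is a simple ℤ^k-monoid: its only ℤ^k-order ideals are {0} and T_{Ω_k}. Moreover every generator v(n) is an atom and ℤ^k acts freely on T_{Ω_k}. -/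
namespace KGraphAux
set_option linter.unusedSectionVars false
open KGraph Finsupp

variable {k : ℕ}

/-- Integer cast of a natural vector. -/
def zc (c : Fin k → ℕ) : Fin k → ℤ := fun i => (c i : ℤ)

/-- The congruence invariant `e(v) - n`. -/
def fm (Λ : KGraph k) (e : Λ.V ≃ (Fin k → ℕ)) : Λ.V × (Fin k → ℤ) → (Fin k → ℤ) :=
  fun q i => (e q.1 i : ℤ) - q.2 i

noncomputable def Phi0 (Λ : KGraph k) (e : Λ.V ≃ (Fin k → ℕ)) :
    TalF Λ →+ ((Fin k → ℤ) →₀ ℕ) :=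
  Finsupp.mapDomain.addMonoidHom (fm Λ e)

theorem Phi0_apply (Λ : KGraph k) (e : Λ.V ≃ (Fin k → ℕ)) (a : TalF Λ) :
    Phi0 Λ e a = Finsupp.mapDomain (fm Λ e) a := rfl

theorem tmk_zero (Λ : KGraph k) (hfin : Λ.RowFinite) : tmk Λ hfin 0 = 0 :=
  map_zero ((TalCon Λ hfin).mk')

theorem tmk_add (Λ : KGraph k) (hfin : Λ.RowFinite) (a b : TalF Λ) :
    tmk Λ hfin (a + b) = tmk Λ hfin a + tmk Λ hfin b :=
  map_add ((TalCon Λ hfin).mk') a b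

/-- total mass of a finsupp to ℕ -/
def mass {α : Type*} (f : α →₀ ℕ) : ℕ := f.sum fun _ n => n

theorem mass_eq_zero {α : Type*} {f : α →₀ ℕ} (h : mass f = 0) : f = 0 := by
  ext x
  by_contra hx
  have hm : x ∈ f.support := Finsupp.mem_support_iff.mpr (by simpa using hx)
  have := (Finset.sum_eq_zero_iff.mp h) x hm
  exact hx (by simpa using this)

section Main

variable (Λ : KGraph k) (hfin : Λ.RowFinite) (e : Λ.V ≃ (Fin k → ℕ))
  (huniq : ∀ (v : Λ.V) (n : Fin k → ℕ), ∃! p : Λ.P, Λ.r p = v ∧ Λ.d p = n)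
  (hsrc : ∀ p : Λ.P, e (Λ.s p) = e (Λ.r p) + Λ.d p)

include hfin e huniq hsrc

theorem toFinset_eq (v : Λ.V) (n : Fin k → ℕ) :
    (hfin v n).toFinset = {(huniq v n).choose} := by
  ext p
  simp only [Set.Finite.mem_toFinset, Finset.mem_singleton]
  constructor
  · intro hp; exact (huniq v n).choose_spec.2 p hp
  · rintro rfl; exact (huniq v n).choose_spec.1

theorem fm_srcStep (v : Λ.V) (n : Fin k → ℤ) (i : Fin k) :
    fm Λ e (Λ.s (huniq v (Pi.single i 1)).choose, n + Pi.single i 1) = fm Λ e (v, n) := by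
  have hc := (huniq v (Pi.single i 1)).choose_spec.1
  have hs := hsrc (huniq v (Pi.single i 1)).choose
  rw [hc.1, hc.2] at hs
  funext j
  simp only [fm, hs, Pi.add_apply]
  rcases eq_or_ne j i with rfl | hne
  · simp [Pi.single_apply]
  · simp [Pi.single_apply, hne]

theorem Phi0_rel (a b : TalF Λ) (h : TalRel Λ hfin a b) : Phi0 Λ e a = Phi0 Λ e b := by
  obtain ⟨v, n, i, ha, hb⟩ := h
  subst ha; subst hb
  rw [toFinset_eq Λ hfin e huniq hsrc, Finset.sum_singleton]
  rw [Phi0_apply, Phi0_apply, Finsupp.mapDomain_single, Finsupp.mapDomain_single,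
    fm_srcStep Λ hfin e huniq hsrc]

theorem talCon_le : TalCon Λ hfin ≤ AddCon.ker (Phi0 Λ e) :=
  AddCon.addConGen_le.mpr (fun a b h => Phi0_rel Λ hfin e huniq hsrc a b h)

noncomputable def Phi : Tal Λ hfin →+ ((Fin k → ℤ) →₀ ℕ) :=
  AddCon.lift _ (Phi0 Λ e) (talCon_le Λ hfin e huniq hsrc)

theorem Phi_tmk (a : TalF Λ) :
    Phi Λ hfin e huniq hsrc (tmk Λ hfin a) = Phi0 Λ e a := rfl

theorem mass_Phi0 (a : TalF Λ) : mass (Phi0 Λ e a) = mass a := by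
  rw [Phi0_apply, mass, Finsupp.sum_mapDomain_index (fun _ => rfl) (fun _ _ _ => rfl)]
  rfl

theorem tmk_eq_zero {a : TalF Λ} (h : tmk Λ hfin a = 0) : a = 0 := by
  have h2 : Phi0 Λ e a = 0 := by
    rw [← Phi_tmk Λ hfin e huniq hsrc, h, map_zero]
  have h3 : mass a = 0 := by rw [← mass_Phi0 Λ hfin e huniq hsrc, h2]; rfl
  exact mass_eq_zero h3

theorem tmk_single_rel (v : Λ.V) (n : Fin k → ℤ) (i : Fin k) :
    tmk Λ hfin (Finsupp.single (v, n) 1) =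
      tmk Λ hfin (Finsupp.single
        (Λ.s (huniq v (Pi.single i 1)).choose, n + Pi.single i 1) 1) := by
  apply (AddCon.eq _).mpr
  have : TalRel Λ hfin (Finsupp.single (v, n) 1)
      (∑ p ∈ (hfin v (Pi.single i 1)).toFinset,
        Finsupp.single (Λ.s p, n + Pi.single i 1) 1) :=
    ⟨v, n, i, rfl, rfl⟩
  have h1 : TalCon Λ hfin (Finsupp.single (v, n) 1)
      (∑ p ∈ (hfin v (Pi.single i 1)).toFinset,
        Finsupp.single (Λ.s p, n + Pi.single i 1) 1) :=
    AddConGen.Rel.of _ _ this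
  rwa [toFinset_eq Λ hfin e huniq hsrc, Finset.sum_singleton] at h1

theorem climb_aux : ∀ (N : ℕ) (c : Fin k → ℕ), (∑ i, c i) = N →
    ∀ (v w : Λ.V) (n m : Fin k → ℤ), e w = e v + c → m = n + zc c →
    tmk Λ hfin (Finsupp.single (v, n) 1) = tmk Λ hfin (Finsupp.single (w, m) 1) := by
  intro N
  induction N with
  | zero =>
    intro c hc v w n m hw hm
    have hc0 : c = 0 := by
      funext i
      exact Finset.sum_eq_zero_iff.mp hc i (Finset.mem_univ i)
    subst hc0
    have hw' : w = v := e.injective (by simpa using hw)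
    subst hw'
    have hm' : m = n := by
      funext i; rw [hm]; simp [zc]
    rw [hm']
  | succ N ih =>
    intro c hc v w n m hw hm
    have hex : ∃ i, c i ≠ 0 := by
      by_contra hno
      push_neg at hno
      simp [hno] at hc
    obtain ⟨i, hi⟩ := hex
    set c' : Fin k → ℕ := Function.update c i (c i - 1) with hc'def
    have hsplit : c = c' + Pi.single i 1 := by
      funext j
      rcases eq_or_ne j i with rfl | hne
      · simp [hc'def, Function.update_self, Pi.single_apply]
        omega
      · simp [hc'def, Function.update_of_ne hne, Pi.single_apply, hne]
    have hsum' : (∑ j, c' j) = N := by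
      have h1 : (∑ j, c j) = (∑ j, c' j) + 1 := by
        rw [hsplit]
        simp [Finset.sum_add_distrib]
      omega
    set p0 := (huniq v (Pi.single i 1)).choose with hp0
    have hstep := tmk_single_rel Λ hfin e huniq hsrc v n i
    have hc0 := (huniq v (Pi.single i 1)).choose_spec.1
    have hsrcp : e (Λ.s p0) = e v + Pi.single i 1 := by
      have := hsrc p0
      rw [hc0.1, hc0.2] at this
      exact this
    rw [hstep]
    apply ih c' hsum' (Λ.s p0) w (n + Pi.single i 1) m
    · rw [hsrcp, hw, hsplit]
      funext j
      simp [add_comm, add_assoc, add_left_comm]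
    · rw [hm, hsplit]
      funext j
      simp only [Pi.add_apply, zc]
      push_cast
      rcases eq_or_ne j i with rfl | hne
      · simp [Pi.single_apply]; ring
      · simp [Pi.single_apply, hne]

theorem climb (c : Fin k → ℕ) (v w : Λ.V) (n m : Fin k → ℤ)
    (hw : e w = e v + c) (hm : m = n + zc c) :
    tmk Λ hfin (Finsupp.single (v, n) 1) = tmk Λ hfin (Finsupp.single (w, m) 1) :=
  climb_aux Λ hfin e huniq hsrc (∑ i, c i) c rfl v w n m hw hm

theorem shiftF_single (p : Fin k → ℤ) (q : Λ.V × (Fin k → ℤ)) (m : ℕ) :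
    shiftF Λ p (Finsupp.single q m) = Finsupp.single (q.1, q.2 + p) m := by
  rw [shiftF, Finsupp.mapDomain_single]

theorem gen_mem_J {J : Set (Tal Λ hfin)} (hJ : IsOrderIdeal Λ hfin J)
    (v : Λ.V) (n : Fin k → ℤ)
    (hv : tmk Λ hfin (Finsupp.single (v, n) 1) ∈ J)
    (w : Λ.V) (m : Fin k → ℤ) :
    tmk Λ hfin (Finsupp.single (w, m) 1) ∈ J := by
  set u := e.symm (e v + e w) with hu
  have heu : e u = e v + e w := by rw [hu, Equiv.apply_symm_apply]
  set n' : Fin k → ℤ := m + zc (e v) - zc (e w) with hn'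
  have h1 : tmk Λ hfin (Finsupp.single (v, n') 1)
      = tmk Λ hfin (Finsupp.single (u, n' + zc (e w)) 1) :=
    climb Λ hfin e huniq hsrc (e w) v u n' _ heu rfl
  have h2 : tmk Λ hfin (Finsupp.single (w, m) 1)
      = tmk Λ hfin (Finsupp.single (u, m + zc (e v)) 1) :=
    climb Λ hfin e huniq hsrc (e v) w u m _ (by rw [heu, add_comm]) rfl
  have hkey : n' + zc (e w) = m + zc (e v) := by
    rw [hn']; ring
  have hmem : tmk Λ hfin (Finsupp.single (v, n') 1) ∈ J := by
    have := hJ.2.2.2 (n' - n) (Finsupp.single (v, n) 1) hv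
    rwa [shiftF_single Λ hfin e huniq hsrc, add_sub_cancel] at this
  rw [h2, ← hkey, ← h1]
  exact hmem

theorem all_mem_J {J : Set (Tal Λ hfin)} (hJ : IsOrderIdeal Λ hfin J)
    (v : Λ.V) (n : Fin k → ℤ)
    (hv : tmk Λ hfin (Finsupp.single (v, n) 1) ∈ J)
    (b : TalF Λ) : tmk Λ hfin b ∈ J := by
  induction b using Finsupp.induction with
  | zero => rw [tmk_zero]; exact hJ.1
  | single_add q r f _ _ ihf =>
    have hq : ∀ r' : ℕ, tmk Λ hfin (Finsupp.single q r') ∈ J := by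
      intro r'
      induction r' with
      | zero => rw [Finsupp.single_zero, tmk_zero]; exact hJ.1
      | succ r'' ihr =>
        have : Finsupp.single q (r'' + 1) = Finsupp.single q r'' + Finsupp.single q 1 := by
          rw [← Finsupp.single_add]
        rw [this, tmk_add]
        exact hJ.2.1 _ _ ihr (gen_mem_J Λ hfin e huniq hsrc hJ v n hv q.1 q.2)
    rw [tmk_add]
    exact hJ.2.1 _ _ (hq r) ihf

end Main
end KGraphAux

open KGraph in
/-- Let `Λ = Ω_k` be the infinite grid `k`-graph (characterized up to isomorphism:
vertices identified with `ℕᵏ`, exactly one path with range `v` and degree `n` for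
all `v, n`, with source `v + n`). Then the talented monoid `T_{Ω_k}` is a simple
`ℤᵏ`-monoid, every generator `v(n)` is an atom, and `ℤᵏ` acts freely on it. -/
theorem stmt18 {k : ℕ} (Λ : KGraph k) (hfin : Λ.RowFinite)
    (e : Λ.V ≃ (Fin k → ℕ))
    (huniq : ∀ (v : Λ.V) (n : Fin k → ℕ), ∃! p : Λ.P, Λ.r p = v ∧ Λ.d p = n)
    (hsrc : ∀ p : Λ.P, e (Λ.s p) = e (Λ.r p) + Λ.d p) :
    (∀ J : Set (Tal Λ hfin), IsOrderIdeal Λ hfin J → J = {0} ∨ J = Set.univ) ∧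
    (∀ (v : Λ.V) (n : Fin k → ℤ),
      tmk Λ hfin (Finsupp.single (v, n) 1) ≠ 0 ∧
      ∀ b c : Tal Λ hfin, tmk Λ hfin (Finsupp.single (v, n) 1) = b + c →
        b = 0 ∨ c = 0) ∧
    (∀ (a : TalF Λ) (p : Fin k → ℤ),
      tmk Λ hfin (shiftF Λ p a) = tmk Λ hfin a → tmk Λ hfin a = 0 ∨ p = 0) := by
  classical
  constructor
  · -- simplicity
    intro J hJ
    by_cases hall : ∀ x ∈ J, x = (0 : Tal Λ hfin)
    · left
      apply Set.eq_singleton_iff_unique_mem.mpr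
      exact ⟨hJ.1, hall⟩
    · right
      push_neg at hall
      obtain ⟨x, hxJ, hx0⟩ := hall
      obtain ⟨a, rfl⟩ := AddCon.mk'_surjective x
      have ha0 : a ≠ 0 := by
        rintro rfl
        exact hx0 (map_zero _)
      obtain ⟨q, hq⟩ := Finsupp.support_nonempty_iff.mpr ha0
      have hle : Finsupp.single q 1 ≤ a :=
        Finsupp.single_le_iff.mpr (Nat.one_le_iff_ne_zero.mpr (Finsupp.mem_support_iff.mp hq))
      have hsplit : Finsupp.single q 1 + (a - Finsupp.single q 1) = a :=
        add_tsub_cancel_of_le hle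
      have hmem : tmk Λ hfin (Finsupp.single q 1) ∈ J := by
        apply hJ.2.2.1 _ (tmk Λ hfin (a - Finsupp.single q 1))
        rw [← KGraphAux.tmk_add Λ hfin, hsplit]
        exact hxJ
      ext y
      simp only [Set.mem_univ, iff_true]
      obtain ⟨b, rfl⟩ := AddCon.mk'_surjective y
      exact KGraphAux.all_mem_J Λ hfin e huniq hsrc hJ q.1 q.2 hmem b
  constructor
  · -- atoms
    intro v n
    constructor
    · intro h
      have := KGraphAux.tmk_eq_zero Λ hfin e huniq hsrc h
      exact one_ne_zero (Finsupp.single_eq_zero.mp this)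
    · intro b c h
      obtain ⟨a1, rfl⟩ := AddCon.mk'_surjective b
      obtain ⟨a2, rfl⟩ := AddCon.mk'_surjective c
      have hphi : KGraphAux.Phi0 Λ e (Finsupp.single (v, n) 1)
          = KGraphAux.Phi0 Λ e a1 + KGraphAux.Phi0 Λ e a2 := by
        have := congrArg (KGraphAux.Phi Λ hfin e huniq hsrc) h
        rw [map_add] at this
        exact this
      have hm : (1 : ℕ) = KGraphAux.mass (KGraphAux.Phi0 Λ e a1)
          + KGraphAux.mass (KGraphAux.Phi0 Λ e a2) := by
        have h1 : KGraphAux.mass (KGraphAux.Phi0 Λ e (Finsupp.single (v, n) 1)) = 1 := by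
          rw [KGraphAux.mass_Phi0 Λ hfin e huniq hsrc, KGraphAux.mass, Finsupp.sum_single_index]; rfl
        rw [← h1, hphi]
        simp [KGraphAux.mass, Finsupp.sum_add_index']
      rcases Nat.add_eq_one_iff.mp hm.symm with ⟨h1, _⟩ | ⟨_, h2⟩
      · left
        have : KGraphAux.mass a1 = 0 := by rw [← KGraphAux.mass_Phi0 Λ hfin e huniq hsrc a1, h1]
        rw [KGraphAux.mass_eq_zero this, map_zero]
      · right
        have : KGraphAux.mass a2 = 0 := by rw [← KGraphAux.mass_Phi0 Λ hfin e huniq hsrc a2, h2]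
        rw [KGraphAux.mass_eq_zero this, map_zero]
  · -- free action
    intro a p h
    by_cases ha : tmk Λ hfin a = 0
    · exact Or.inl ha
    right
    have ha0 : a ≠ 0 := by
      rintro rfl
      exact ha (KGraphAux.tmk_zero Λ hfin)
    have hphi : KGraphAux.Phi0 Λ e (shiftF Λ p a) = KGraphAux.Phi0 Λ e a := by
      have := congrArg (KGraphAux.Phi Λ hfin e huniq hsrc) h
      exact this
    have hmap : KGraphAux.Phi0 Λ e (shiftF Λ p a)
        = Finsupp.mapDomain (fun d => d - p) (KGraphAux.Phi0 Λ e a) := by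
      rw [KGraphAux.Phi0_apply, KGraphAux.Phi0_apply, shiftF,
        ← Finsupp.mapDomain_comp, ← Finsupp.mapDomain_comp]
      congr 1
      funext q
      funext i
      simp [KGraphAux.fm, Function.comp]
      ring
    set F := KGraphAux.Phi0 Λ e a with hF
    have hFinv : Finsupp.mapDomain (fun d => d - p) F = F := by
      rw [← hmap, hphi]
    -- weighted sum
    have hpsi : (Finsupp.mapDomain (fun d => d - p) F).sum (fun d r => (r : ℤ) • d)
        = F.sum (fun d r => (r : ℤ) • d) - (KGraphAux.mass F : ℤ) • p := by
      rw [Finsupp.sum_mapDomain_index (fun _ => by simp) (fun b m₁ m₂ => by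
        push_cast; rw [add_smul])]
      have h1 : ∀ d : Fin k → ℤ, ∀ r : ℕ, (r : ℤ) • (d - p) = (r : ℤ) • d - (r : ℤ) • p := by
        intro d r; rw [smul_sub]
      calc F.sum (fun d r => (r : ℤ) • (d - p))
          = F.sum (fun d r => (r : ℤ) • d - (r : ℤ) • p) := by
            apply Finsupp.sum_congr; intro d _; rw [h1]
        _ = F.sum (fun d r => (r : ℤ) • d) - F.sum (fun d r => (r : ℤ) • p) := by
            rw [Finsupp.sum_sub]
        _ = F.sum (fun d r => (r : ℤ) • d) - (KGraphAux.mass F : ℤ) • p := by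
            congr 1
            rw [KGraphAux.mass, Finsupp.sum, Finsupp.sum, Nat.cast_sum, Finset.sum_smul]
    rw [hFinv] at hpsi
    have hzero : (KGraphAux.mass F : ℤ) • p = 0 := sub_eq_self.mp hpsi.symm
    have hmne : KGraphAux.mass F ≠ 0 := by
      intro h0
      have : KGraphAux.mass a = 0 := by rw [← KGraphAux.mass_Phi0 Λ hfin e huniq hsrc a]; exact h0
      exact ha0 (KGraphAux.mass_eq_zero this)
    funext i
    have := congrFun hzero i
    simp only [Pi.smul_apply, smul_eq_mul, Pi.zero_apply] at this
    rcases mul_eq_zero.mp this with h | h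
    · exact absurd (by exact_mod_cast h) hmne
    · exact h
end

section
/- Consider the commutative monoid T generated by a single generator v(n) for each n ∈ ℤ², subject to the relations v(n) = 3·v(n+e₁) and v(n) = 2·v(n+e₂) for all n ∈ ℤ² (the talented monoid of the one-vertex 2-graph with 3 blue and 2 red loops). Then ℤ² acts freely on T: no nonzero element x of T satisfies ᵖx = x for p ≠ 0. In particular, T is conical, cancellative, not atomic (v(0) is not an atom and every element is a positive multiple of some v(p)), and 3^a = 2^b forces a = b = 0 in any fixed-point equation. -/
/-- The free commutative monoid on the generators `v(n)`, `n ∈ ℤ²`. -/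
abbrev F19 : Type := (Fin 2 → ℤ) →₀ ℕ

/-- The defining relations `v(n) = 3·v(n+e₁)` and `v(n) = 2·v(n+e₂)` of the
talented monoid of the one-vertex 2-graph with 3 blue and 2 red loops. -/
def R19 : F19 → F19 → Prop := fun a b =>
  ∃ n : Fin 2 → ℤ,
    (a = Finsupp.single n 1 ∧ b = Finsupp.single (n + Pi.single 0 1) 3) ∨
    (a = Finsupp.single n 1 ∧ b = Finsupp.single (n + Pi.single 1 1) 2)

/-- The talented monoid `T`. -/
def T19 : Type := (addConGen R19).Quotient

noncomputable instance : AddCommMonoid T19 :=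
  inferInstanceAs (AddCommMonoid (addConGen R19).Quotient)

/-- The quotient map. -/
noncomputable def mk19 : F19 → T19 := (addConGen R19).mk'

/-- The state shift on representatives, inducing the `ℤ²`-action on `T`. -/
noncomputable def shift19 (p : Fin 2 → ℤ) : F19 → F19 :=
  Finsupp.mapDomain (· + p)

noncomputable section

def w19 (n : Fin 2 → ℤ) : ℚ := 3 ^ (-(n 0)) * 2 ^ (-(n 1))

lemma w19_pos (n : Fin 2 → ℤ) : 0 < w19 n :=
  mul_pos (zpow_pos (by norm_num) _) (zpow_pos (by norm_num) _)

def phi0 : F19 →+ ℚ :=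
  Finsupp.liftAddHom fun n => (AddMonoidHom.mulRight (w19 n)).comp (Nat.castAddMonoidHom ℚ)

lemma phi0_single (n : Fin 2 → ℤ) (t : ℕ) : phi0 (Finsupp.single n t) = t * w19 n := by
  simp [phi0]

lemma w19_add (n m : Fin 2 → ℤ) : w19 (n + m) = w19 n * w19 m := by
  simp only [w19, Pi.add_apply, neg_add, zpow_add₀ (by norm_num : (3:ℚ) ≠ 0),
    zpow_add₀ (by norm_num : (2:ℚ) ≠ 0)]
  ring

lemma w19_e1 (n : Fin 2 → ℤ) : 3 * w19 (n + Pi.single 0 1) = w19 n := by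
  rw [w19_add]
  have : w19 (Pi.single 0 1) = 3⁻¹ := by
    simp [w19, Pi.single_apply]
  rw [this]; have := w19_pos n; ring

lemma w19_e2 (n : Fin 2 → ℤ) : 2 * w19 (n + Pi.single 1 1) = w19 n := by
  rw [w19_add]
  have : w19 (Pi.single 1 1) = 2⁻¹ := by
    simp [w19, Pi.single_apply]
  rw [this]; ring

lemma rel_le : addConGen R19 ≤ AddCon.ker phi0 := by
  refine AddCon.addConGen_le.mpr ?_
  rintro x y ⟨n, ⟨rfl, rfl⟩ | ⟨rfl, rfl⟩⟩ <;>
    simp only [AddCon.ker_rel, phi0_single] <;> push_cast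
  · rw [← w19_e1 n]; ring
  · rw [← w19_e2 n]; ring

def phi : T19 →+ ℚ := AddCon.lift _ phi0 rel_le

lemma phi_mk (a : F19) : phi (mk19 a) = phi0 a := rfl

lemma mk19_add (a b : F19) : mk19 (a + b) = mk19 a + mk19 b := map_add (addConGen R19).mk' a b
lemma mk19_nsmul (t : ℕ) (a : F19) : mk19 (t • a) = t • mk19 a := map_nsmul (addConGen R19).mk' t a
lemma mk19_zero : mk19 0 = 0 := map_zero (addConGen R19).mk'

lemma mk_rel {a b : F19} (h : R19 a b) : mk19 a = mk19 b :=
  ((addConGen R19).eq).mpr (AddConGen.Rel.of _ _ h)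

lemma mk_single (n : Fin 2 → ℤ) (k : ℕ) :
    mk19 (Finsupp.single n k) = k • mk19 (Finsupp.single n 1) := by
  rw [← mk19_nsmul, Finsupp.smul_single, smul_eq_mul, mul_one]

lemma step1 (n : Fin 2 → ℤ) :
    mk19 (Finsupp.single n 1) = 3 • mk19 (Finsupp.single (n + Pi.single 0 1) 1) := by
  rw [mk_rel ⟨n, Or.inl ⟨rfl, rfl⟩⟩, mk_single]

lemma step2 (n : Fin 2 → ℤ) :
    mk19 (Finsupp.single n 1) = 2 • mk19 (Finsupp.single (n + Pi.single 1 1) 1) := by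
  rw [mk_rel ⟨n, Or.inr ⟨rfl, rfl⟩⟩, mk_single]

lemma pushA (p : Fin 2 → ℤ) (a : ℕ) :
    mk19 (Finsupp.single p 1) =
      3 ^ a • mk19 (Finsupp.single (p + (a : ℤ) • Pi.single 0 1) 1) := by
  induction a with
  | zero => simp
  | succ a ih =>
    have hpt : p + (a : ℤ) • Pi.single 0 1 + Pi.single 0 1
        = p + ((a + 1 : ℕ) : ℤ) • Pi.single 0 1 := by
      push_cast; rw [add_smul, one_smul]; abel
    rw [ih, step1 (p + (a : ℤ) • Pi.single 0 1), hpt, smul_smul]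
    congr 1 <;> ring

lemma pushB (p : Fin 2 → ℤ) (b : ℕ) :
    mk19 (Finsupp.single p 1) =
      2 ^ b • mk19 (Finsupp.single (p + (b : ℤ) • Pi.single 1 1) 1) := by
  induction b with
  | zero => simp
  | succ b ih =>
    have hpt : p + (b : ℤ) • Pi.single 1 1 + Pi.single 1 1
        = p + ((b + 1 : ℕ) : ℤ) • Pi.single 1 1 := by
      push_cast; rw [add_smul, one_smul]; abel
    rw [ih, step2 (p + (b : ℤ) • Pi.single 1 1), hpt, smul_smul]
    congr 1 <;> ring

lemma push (p q : Fin 2 → ℤ) (h0 : p 0 ≤ q 0) (h1 : p 1 ≤ q 1) :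
    ∃ c : ℕ, mk19 (Finsupp.single p 1) = c • mk19 (Finsupp.single q 1) := by
  refine ⟨3 ^ (q 0 - p 0).toNat * 2 ^ (q 1 - p 1).toNat, ?_⟩
  have hpt : p + ((q 0 - p 0).toNat : ℤ) • Pi.single 0 1
      + ((q 1 - p 1).toNat : ℤ) • Pi.single 1 1 = q := by
    funext i
    fin_cases i <;> simp [Pi.single_apply] <;> omega
  rw [pushA p (q 0 - p 0).toNat,
    pushB (p + ((q 0 - p 0).toNat : ℤ) • Pi.single 0 1) (q 1 - p 1).toNat, hpt, smul_smul]

lemma nf (x : F19) : ∃ t : ℕ, ∃ p : Fin 2 → ℤ, mk19 x = t • mk19 (Finsupp.single p 1) := by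
  induction x using Finsupp.induction with
  | zero => exact ⟨0, 0, by simp [mk19_zero]⟩
  | single_add n k f _ _ ih =>
    obtain ⟨t, p, hp⟩ := ih
    set q : Fin 2 → ℤ := fun i => max (n i) (p i) with hq
    obtain ⟨c, hc⟩ := push n q (le_max_left _ _) (le_max_left _ _)
    obtain ⟨d, hd⟩ := push p q (le_max_right _ _) (le_max_right _ _)
    refine ⟨k * c + t * d, q, ?_⟩
    rw [mk19_add, mk_single, hp, hc, hd, smul_smul, smul_smul, add_smul]

lemma phi0_nonneg (x : F19) : 0 ≤ phi0 x := by
  rw [phi0, Finsupp.liftAddHom_apply]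
  refine Finset.sum_nonneg fun n _ => ?_
  exact mul_nonneg (Nat.cast_nonneg _) (w19_pos n).le

lemma phi0_pos {x : F19} (hx : x ≠ 0) : 0 < phi0 x := by
  rw [phi0, Finsupp.liftAddHom_apply]
  obtain ⟨n, hn⟩ := Finsupp.support_nonempty_iff.mpr hx
  refine Finset.sum_pos' (fun m _ => mul_nonneg (Nat.cast_nonneg _) (w19_pos m).le)
    ⟨n, hn, ?_⟩
  have h1 : 1 ≤ x n := Nat.one_le_iff_ne_zero.mpr (Finsupp.mem_support_iff.mp hn)
  have h1' : (1:ℚ) ≤ (x n : ℚ) := by exact_mod_cast h1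
  have := w19_pos n
  show (0:ℚ) < (x n : ℚ) * w19 n
  nlinarith

lemma phi_nsmul_single (t : ℕ) (p : Fin 2 → ℤ) :
    phi (t • mk19 (Finsupp.single p 1)) = t * w19 p := by
  rw [map_nsmul, phi_mk, phi0_single, nsmul_eq_mul]
  push_cast; ring

lemma phi_inj : Function.Injective phi := by
  intro x y h
  obtain ⟨a, rfl⟩ := AddCon.mk'_surjective x
  obtain ⟨b, rfl⟩ := AddCon.mk'_surjective y
  obtain ⟨t, p, hp⟩ := nf a
  obtain ⟨s, q, hq⟩ := nf b
  have hx : mk19 a = t • mk19 (Finsupp.single p 1) := hp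
  have hy : mk19 b = s • mk19 (Finsupp.single q 1) := hq
  set r : Fin 2 → ℤ := fun i => max (p i) (q i) with hr
  obtain ⟨c, hc⟩ := push p r (le_max_left _ _) (le_max_left _ _)
  obtain ⟨d, hd⟩ := push q r (le_max_right _ _) (le_max_right _ _)
  have hx' : mk19 a = (t * c) • mk19 (Finsupp.single r 1) := by rw [hx, hc, smul_smul]
  have hy' : mk19 b = (s * d) • mk19 (Finsupp.single r 1) := by rw [hy, hd, smul_smul]
  have h2 : ((t * c : ℕ) : ℚ) * w19 r = ((s * d : ℕ) : ℚ) * w19 r := by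
    rw [← phi_nsmul_single, ← phi_nsmul_single, ← hx', ← hy']
    exact h
  have h3 : (t * c : ℕ) = (s * d : ℕ) := by
    have := mul_right_cancel₀ (w19_pos r).ne' h2
    exact_mod_cast this
  show mk19 a = mk19 b
  rw [hx', hy', h3]

lemma mk_ne_zero {x : F19} (hx : x ≠ 0) : mk19 x ≠ 0 := by
  intro h
  have : phi (mk19 x) = 0 := by rw [h, map_zero]
  rw [phi_mk] at this
  exact absurd this (phi0_pos hx).ne'

lemma nsmul_single_ne_zero {t : ℕ} (ht : 0 < t) (p : Fin 2 → ℤ) :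
    t • mk19 (Finsupp.single p 1) ≠ 0 := by
  intro h
  have : phi (t • mk19 (Finsupp.single p 1)) = 0 := by rw [h, map_zero]
  rw [phi_nsmul_single] at this
  have := w19_pos p
  have ht' : (0:ℚ) < t := by exact_mod_cast ht
  nlinarith

lemma nf' (x : T19) (hx : x ≠ 0) :
    ∃ t : ℕ, 1 ≤ t ∧ ∃ p : Fin 2 → ℤ, x = t • mk19 (Finsupp.single p 1) := by
  obtain ⟨a, rfl⟩ := AddCon.mk'_surjective x
  obtain ⟨t, p, hp⟩ := nf a
  have hx' : mk19 a = t • mk19 (Finsupp.single p 1) := hp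
  refine ⟨t, ?_, p, hx'⟩
  rcases Nat.eq_zero_or_pos t with rfl | h
  · rw [zero_smul] at hx'
    exact absurd hx' hx
  · exact h

lemma nat_le (a b c d : ℕ) (h : 3^a * 2^b = 3^c * 2^d) (hac : a ≤ c) : a = c := by
  by_contra hne
  have hlt : a < c := lt_of_le_of_ne hac hne
  have h1 : 3^a * 2^b = 3^a * (3^(c-a) * 2^d) := by
    rw [← mul_assoc, ← pow_add]
    rw [show a + (c - a) = c by omega] at *
    exact h
  have h2 : 2^b = 3^(c-a) * 2^d := Nat.eq_of_mul_eq_mul_left (by positivity) h1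
  have h3 : (3:ℕ) ∣ 2^b := by
    rw [h2]
    exact Dvd.dvd.mul_right (dvd_pow_self 3 (by omega : c - a ≠ 0)) _
  have h4 := Nat.Prime.dvd_of_dvd_pow Nat.prime_three h3
  omega

lemma nat_unique (a b c d : ℕ) (h : 3^a * 2^b = 3^c * 2^d) : a = c ∧ b = d := by
  have hac : a = c := by
    rcases le_total a c with h' | h'
    · exact nat_le a b c d h h'
    · exact (nat_le c d a b h.symm h').symm
  subst hac
  refine ⟨rfl, ?_⟩
  have h2 : (2:ℕ)^b = 2^d := Nat.eq_of_mul_eq_mul_left (by positivity) h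
  exact Nat.pow_right_injective (le_refl 2) h2

lemma w19_eq_one {p : Fin 2 → ℤ} (h : w19 p = 1) : p = 0 := by
  have h3 : (3:ℚ) ≠ 0 := by norm_num
  have h2 : (2:ℚ) ≠ 0 := by norm_num
  set A := p 0 with hA
  set B := p 1 with hB
  have hw : (3:ℚ)^(-A) * 2^(-B) = 1 := h
  have hq : (3:ℚ)^A * 2^B = 1 := by
    rw [show (3:ℚ)^A * 2^B = ((3:ℚ)^(-A) * 2^(-B))⁻¹ by
      rw [mul_inv, ← zpow_neg, ← zpow_neg, neg_neg, neg_neg], hw, inv_one]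
  set m : ℕ := (A + A.natAbs).toNat with hm
  set n : ℕ := (B + B.natAbs).toNat with hn
  have key : (3:ℚ)^(A + (A.natAbs:ℤ)) * 2^(B + (B.natAbs:ℤ))
      = 3^(A.natAbs:ℤ) * 2^(B.natAbs:ℤ) := by
    rw [zpow_add₀ h3, zpow_add₀ h2]
    calc (3:ℚ)^A * 3^(A.natAbs:ℤ) * (2^B * 2^(B.natAbs:ℤ))
        = (3^A * 2^B) * (3^(A.natAbs:ℤ) * 2^(B.natAbs:ℤ)) := by ring
      _ = 3^(A.natAbs:ℤ) * 2^(B.natAbs:ℤ) := by rw [hq, one_mul]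
  have hmz : A + (A.natAbs:ℤ) = (m:ℤ) := by omega
  have hnz : B + (B.natAbs:ℤ) = (n:ℤ) := by omega
  rw [hmz, hnz, zpow_natCast, zpow_natCast, zpow_natCast, zpow_natCast] at key
  have keyn : 3^m * 2^n = 3^(A.natAbs) * 2^(B.natAbs) := by exact_mod_cast key
  obtain ⟨e1, e2⟩ := nat_unique _ _ _ _ keyn
  have hA0 : A = 0 := by omega
  have hB0 : B = 0 := by omega
  funext i
  fin_cases i
  · show p 0 = (0:ℤ); omega
  · show p 1 = (0:ℤ); omega

lemma phi0_shift (p : Fin 2 → ℤ) (a : F19) : phi0 (shift19 p a) = w19 p * phi0 a := by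
  induction a using Finsupp.induction with
  | zero => simp [shift19]
  | single_add n k f _ _ ih =>
    have hs : shift19 p (Finsupp.single n k + f)
        = Finsupp.single (n + p) k + shift19 p f := by
      rw [shift19, Finsupp.mapDomain_add, Finsupp.mapDomain_single]
    rw [hs, map_add, map_add, ih, phi0_single, phi0_single, w19_add, mul_add]
    ring

theorem stmt19' :
    (∀ (a : F19) (p : Fin 2 → ℤ),
      mk19 (shift19 p a) = mk19 a → mk19 a = 0 ∨ p = 0) ∧
    (∀ x y : T19, x + y = 0 → x = 0) ∧
    (∀ x y z : T19, x + y = x + z → y = z) ∧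
    ¬ (mk19 (Finsupp.single (0 : Fin 2 → ℤ) 1) ≠ 0 ∧
        ∀ b c : T19, mk19 (Finsupp.single (0 : Fin 2 → ℤ) 1) = b + c →
          b = 0 ∨ c = 0) ∧
    ¬ (∀ x : T19, x ≠ 0 → ∃ l : Multiset T19,
        (∀ a ∈ l, a ≠ 0 ∧ ∀ b c : T19, a = b + c → b = 0 ∨ c = 0) ∧
        l.sum = x) ∧
    (∀ x : T19, x ≠ 0 → ∃ t : ℕ, 1 ≤ t ∧ ∃ p : Fin 2 → ℤ,
      x = t • mk19 (Finsupp.single p 1)) ∧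
    (∀ a b : ℕ, 3 ^ a = 2 ^ b → a = 0 ∧ b = 0) := by
  have hatomless : ∀ x : T19, x ≠ 0 →
      ¬ (x ≠ 0 ∧ ∀ b c : T19, x = b + c → b = 0 ∨ c = 0) := by
    rintro x hx ⟨-, hat⟩
    obtain ⟨t, ht, p, rfl⟩ := nf' x hx
    have hsplit : t • mk19 (Finsupp.single p 1)
        = mk19 (Finsupp.single (p + Pi.single 0 1) 1)
          + (3 * t - 1) • mk19 (Finsupp.single (p + Pi.single 0 1) 1) := by
      rw [← succ_nsmul', show 3 * t - 1 + 1 = 3 * t by omega, step1 p, smul_smul,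
        mul_comm]
    rcases hat _ _ hsplit with h | h
    · rw [← one_nsmul (mk19 (Finsupp.single (p + Pi.single 0 1) 1))] at h
      exact nsmul_single_ne_zero one_pos _ h
    · exact nsmul_single_ne_zero (by omega : 0 < 3 * t - 1) _ h
  refine ⟨?_, ?_, ?_, ?_, ?_, nf', ?_⟩
  · -- freeness
    intro a p h
    by_cases ha : mk19 a = 0
    · exact Or.inl ha
    right
    have ha' : a ≠ 0 := fun h0 => ha (h0 ▸ mk19_zero)
    have hphi : phi0 (shift19 p a) = phi0 a := by
      rw [← phi_mk, ← phi_mk, h]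
    rw [phi0_shift] at hphi
    have hpos := phi0_pos ha'
    have hw : w19 p = 1 := by
      have := mul_right_cancel₀ hpos.ne' (hphi.trans (one_mul (phi0 a)).symm)
      exact this
    exact w19_eq_one hw
  · -- conical
    intro x y h
    have h1 : phi x + phi y = 0 := by rw [← map_add, h, map_zero]
    have hx : 0 ≤ phi x := by
      obtain ⟨a, rfl⟩ := AddCon.mk'_surjective x
      exact phi0_nonneg a
    have hy : 0 ≤ phi y := by
      obtain ⟨a, rfl⟩ := AddCon.mk'_surjective y
      exact phi0_nonneg a
    have : phi x = 0 := by linarith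
    exact phi_inj (this.trans (map_zero phi).symm)
  · -- cancellative
    intro x y z h
    apply phi_inj
    have : phi x + phi y = phi x + phi z := by rw [← map_add, ← map_add, h]
    linarith
  · -- v0 not an atom
    rintro ⟨h1, h2⟩
    exact hatomless _ h1 ⟨h1, h2⟩
  · -- not atomic
    intro h
    obtain ⟨l, hl, hsum⟩ := h (mk19 (Finsupp.single (0 : Fin 2 → ℤ) 1))
      (mk_ne_zero (by simp [Finsupp.single_eq_zero]))
    have hne : l ≠ 0 := by
      rintro rfl
      exact mk_ne_zero (x := Finsupp.single (0 : Fin 2 → ℤ) 1)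
        (by simp [Finsupp.single_eq_zero]) (hsum.symm)
    obtain ⟨a, ha⟩ := Multiset.exists_mem_of_ne_zero hne
    obtain ⟨ha0, hat⟩ := hl a ha
    exact hatomless a ha0 ⟨ha0, hat⟩
  · -- 3^a = 2^b
    intro a b h
    have : 3^a * 2^0 = 3^0 * 2^b := by simpa using h
    obtain ⟨h1, h2⟩ := nat_unique _ _ _ _ this
    exact ⟨h1, h2.symm⟩


/-- For the talented monoid `T` of the one-vertex 2-graph with 3 loops of degree
`e₁` and 2 loops of degree `e₂` (relations `v(n) = 3v(n+e₁) = 2v(n+e₂)`), the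
`ℤ²`-action is free; moreover `T` is conical, cancellative and not atomic:
`v(0)` is not an atom, every nonzero element is a positive multiple of some
`v(p)`, and `3^a = 2^b` forces `a = b = 0`. -/
theorem stmt19 :
    (∀ (a : F19) (p : Fin 2 → ℤ),
      mk19 (shift19 p a) = mk19 a → mk19 a = 0 ∨ p = 0) ∧
    (∀ x y : T19, x + y = 0 → x = 0) ∧
    (∀ x y z : T19, x + y = x + z → y = z) ∧
    ¬ (mk19 (Finsupp.single (0 : Fin 2 → ℤ) 1) ≠ 0 ∧
        ∀ b c : T19, mk19 (Finsupp.single (0 : Fin 2 → ℤ) 1) = b + c →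
          b = 0 ∨ c = 0) ∧
    ¬ (∀ x : T19, x ≠ 0 → ∃ l : Multiset T19,
        (∀ a ∈ l, a ≠ 0 ∧ ∀ b c : T19, a = b + c → b = 0 ∨ c = 0) ∧
        l.sum = x) ∧
    (∀ x : T19, x ≠ 0 → ∃ t : ℕ, 1 ≤ t ∧ ∃ p : Fin 2 → ℤ,
      x = t • mk19 (Finsupp.single p 1)) ∧
    (∀ a b : ℕ, 3 ^ a = 2 ^ b → a = 0 ∧ b = 0) := stmt19'
end
end
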